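/- arXiv:1808.04903 — 4 statements merged into one kernel-verified Lean document; each statement's English description precedes it below -/
import Mathlib

section
/- Let σ be an effective regular action of T_n on the free associative algebra F_n = K⟨z_1,…,z_n⟩ such that each σ(t)(z_i) has zero constant term and the linear part of σ is diagonal, i.e. σ(t)(z_i) = t_1^{m_{i1}}⋯t_n^{m_{in}} z_i + (terms of degree ≥ 2) for an integer matrix [m_{ij}]. Then the integer matrix [m_{ij}] is nonsingular (has nonzero determinant). -/
/-- The coefficient of a free-algebra element at a given word in the generators. -/
noncomputable def coeffW {K : Type*} [CommSemiring K] {n : ℕ}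
    (x : FreeAlgebra K (Fin n)) (w : FreeMonoid (Fin n)) : K :=
  (FreeAlgebra.equivMonoidAlgebraFreeMonoid x).coeff w

/-- Evaluation of a (multivariate) Laurent polynomial `F` at a point `t` of the torus. -/
noncomputable def lEval {K : Type*} [Field K] {r : ℕ}
    (F : (Fin r → ℤ) →₀ K) (t : Fin r → Kˣ) : K :=
  F.sum fun m c => c * ∏ j, ((t j ^ m j : Kˣ) : K)

/-- A regular action of the torus `(Kˣ)^r` on the free algebra `K⟨z_1,…,z_n⟩`:
every coefficient of `σ(t)(z_i)` is a Laurent polynomial function of `t`, and the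
degrees of the `σ(t)(z_i)` are bounded uniformly in `t`. -/
def IsRegularAction {K : Type*} [Field K] {r n : ℕ}
    (σ : (Fin r → Kˣ) →* (FreeAlgebra K (Fin n) ≃ₐ[K] FreeAlgebra K (Fin n))) : Prop :=
  (∀ (i : Fin n) (w : FreeMonoid (Fin n)), ∃ F : (Fin r → ℤ) →₀ K,
      ∀ t, coeffW (σ t (FreeAlgebra.ι K i)) w = lEval F t) ∧
  ∃ N : ℕ, ∀ (t : Fin r → Kˣ) (i : Fin n) (w : FreeMonoid (Fin n)),
      N < w.length → coeffW (σ t (FreeAlgebra.ι K i)) w = 0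



section Helpers

variable {K : Type*} [Field K] {n : ℕ}

instance freeMonoidDecEq {α : Type*} [DecidableEq α] : DecidableEq (FreeMonoid α) :=
  fun a b => decidable_of_iff (a.toList = b.toList)
    ⟨fun h => FreeMonoid.toList.injective h, congrArg _⟩

/-- The coefficient functional as a linear map. -/
noncomputable def coeffL (K : Type*) [Field K] {n : ℕ} (w : FreeMonoid (Fin n)) :
    FreeAlgebra K (Fin n) →ₗ[K] K :=
  (Finsupp.lapply w).comp
    ((MonoidAlgebra.coeffLinearEquiv K).toLinearMap.comp
    (FreeAlgebra.equivMonoidAlgebraFreeMonoid (R := K) (X := Fin n)).toLinearEquiv.toLinearMap)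

lemma coeffW_eqL (x : FreeAlgebra K (Fin n)) (w : FreeMonoid (Fin n)) :
    coeffW x w = coeffL K w x := rfl

lemma coeffW_add (x y : FreeAlgebra K (Fin n)) (w) :
    coeffW (x + y) w = coeffW x w + coeffW y w := by
  simp [coeffW_eqL, map_add]

lemma coeffW_sub (x y : FreeAlgebra K (Fin n)) (w) :
    coeffW (x - y) w = coeffW x w - coeffW y w := by
  simp [coeffW_eqL, map_sub]

lemma coeffW_smul (c : K) (x : FreeAlgebra K (Fin n)) (w) :
    coeffW (c • x) w = c * coeffW x w := by
  simp [coeffW_eqL, map_smul]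

lemma coeffW_zero (w : FreeMonoid (Fin n)) : coeffW (0 : FreeAlgebra K (Fin n)) w = 0 := by
  simp [coeffW_eqL, map_zero]

lemma coeffW_sum {α : Type*} (S : Finset α) (f : α → FreeAlgebra K (Fin n)) (w) :
    coeffW (∑ u ∈ S, f u) w = ∑ u ∈ S, coeffW (f u) w := by
  simp [coeffW_eqL, map_sum]

/-- The monomial corresponding to a word. -/
noncomputable def Wd (K : Type*) [Field K] {n : ℕ} (u : FreeMonoid (Fin n)) :
    FreeAlgebra K (Fin n) :=
  FreeAlgebra.equivMonoidAlgebraFreeMonoid.symm (MonoidAlgebra.of K (FreeMonoid (Fin n)) u)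

lemma coeffW_Wd (u w : FreeMonoid (Fin n)) :
    coeffW (Wd K u) w = if w = u then 1 else 0 := by
  simp only [coeffW, Wd]; rw [AlgEquiv.apply_symm_apply]
  simp [MonoidAlgebra.of_apply, MonoidAlgebra.coeff_single, Finsupp.single_apply, eq_comm]

lemma Wd_of (i : Fin n) : Wd K (FreeMonoid.of i) = FreeAlgebra.ι K i := by
  rw [Wd, AlgEquiv.symm_apply_eq]
  rw [FreeAlgebra.equivMonoidAlgebraFreeMonoid]
  simp [FreeAlgebra.lift_ι_apply]

lemma Wd_one : Wd K (1 : FreeMonoid (Fin n)) = 1 := by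
  rw [Wd, map_one, map_one]

lemma Wd_mul (u v : FreeMonoid (Fin n)) : Wd K (u * v) = Wd K u * Wd K v := by
  rw [Wd, map_mul, map_mul]; rfl

lemma coeffW_iota (i : Fin n) (w : FreeMonoid (Fin n)) :
    coeffW (FreeAlgebra.ι K i) w = if w = FreeMonoid.of i then 1 else 0 := by
  rw [← Wd_of, coeffW_Wd]

lemma eq_sum_coeffW (x : FreeAlgebra K (Fin n)) :
    x = ∑ u ∈ (FreeAlgebra.equivMonoidAlgebraFreeMonoid x).coeff.support, coeffW x u • Wd K u := by
  apply FreeAlgebra.equivMonoidAlgebraFreeMonoid.injective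
  rw [map_sum]
  have h1 : ∀ u ∈ (FreeAlgebra.equivMonoidAlgebraFreeMonoid x).coeff.support,
      FreeAlgebra.equivMonoidAlgebraFreeMonoid (coeffW x u • Wd K u)
        = MonoidAlgebra.single u (coeffW x u) := by
    intro u _
    rw [map_smul, Wd, AlgEquiv.apply_symm_apply]
    simp [MonoidAlgebra.of_apply, MonoidAlgebra.smul_single]
  rw [Finset.sum_congr rfl h1]
  exact (MonoidAlgebra.sum_coeff_single _).symm

end Helpers

section GeDeg

variable {K : Type*} [Field K] {n : ℕ}

/-- `GeDeg d x` : every word of length `< d` has zero coefficient in `x`. -/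
def GeDeg (d : ℕ) (x : FreeAlgebra K (Fin n)) : Prop :=
  ∀ w : FreeMonoid (Fin n), w.length < d → coeffW x w = 0

lemma GeDeg.mono {d d' : ℕ} {x : FreeAlgebra K (Fin n)} (h : GeDeg d x) (hle : d' ≤ d) :
    GeDeg d' x := fun w hw => h w (lt_of_lt_of_le hw hle)

lemma GeDeg.smul {d : ℕ} {x : FreeAlgebra K (Fin n)} (c : K) (h : GeDeg d x) :
    GeDeg d (c • x) := fun w hw => by rw [coeffW_smul, h w hw, mul_zero]

lemma GeDeg.sum {d : ℕ} {α : Type*} {S : Finset α} {f : α → FreeAlgebra K (Fin n)}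
    (h : ∀ u ∈ S, GeDeg d (f u)) : GeDeg d (∑ u ∈ S, f u) := fun w hw => by
  rw [coeffW_sum]
  exact Finset.sum_eq_zero fun u hu => h u hu w hw

lemma GeDeg.zero (d : ℕ) : GeDeg d (0 : FreeAlgebra K (Fin n)) := fun w _ => coeffW_zero w

lemma GeDeg.mul {d e : ℕ} {x y : FreeAlgebra K (Fin n)} (hx : GeDeg d x) (hy : GeDeg e y) :
    GeDeg (d + e) (x * y) := by
  intro w hw
  by_contra hne
  have hmem : w ∈ (FreeAlgebra.equivMonoidAlgebraFreeMonoid (x * y)).coeff.support :=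
    Finsupp.mem_support_iff.2 hne
  rw [map_mul] at hmem
  obtain ⟨a, ha, b, hb, hab⟩ := Finset.mem_mul.mp (MonoidAlgebra.support_coeff_mul_subset _ _ hmem)
  have ha' : ¬ a.length < d := fun h => (Finsupp.mem_support_iff.1 ha) (hx a h)
  have hb' : ¬ b.length < e := fun h => (Finsupp.mem_support_iff.1 hb) (hy b h)
  rw [← hab, FreeMonoid.length_mul] at hw
  omega

lemma GeDeg_Wd {d : ℕ} {u : FreeMonoid (Fin n)} (h : d ≤ u.length) : GeDeg d (Wd K u) := by
  intro w hw
  rw [coeffW_Wd, if_neg]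
  intro he; subst he; omega

lemma GeDeg_iota (i : Fin n) : GeDeg 1 (FreeAlgebra.ι K i) := by
  rw [← Wd_of]; exact GeDeg_Wd (by simp [FreeMonoid.length_of])

lemma key1 (φ : FreeAlgebra K (Fin n) ≃ₐ[K] FreeAlgebra K (Fin n))
    (h : ∀ j, GeDeg 1 (φ (FreeAlgebra.ι K j))) (u : FreeMonoid (Fin n)) :
    GeDeg u.length (φ (Wd K u)) := by
  induction u using FreeMonoid.recOn with
  | one => rw [Wd_one, map_one]; intro w hw; simp [FreeMonoid.length_one] at hw
  | of_mul x xs ih =>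
    rw [Wd_mul, Wd_of, map_mul, FreeMonoid.length_mul, FreeMonoid.length_of]
    exact GeDeg.mul (h x) ih

lemma key2 (φ : FreeAlgebra K (Fin n) ≃ₐ[K] FreeAlgebra K (Fin n))
    (h1 : ∀ j, GeDeg 1 (φ (FreeAlgebra.ι K j)))
    (h2 : ∀ j, GeDeg 2 (φ (FreeAlgebra.ι K j) - FreeAlgebra.ι K j)) (u : FreeMonoid (Fin n)) :
    GeDeg (u.length + 1) (φ (Wd K u) - Wd K u) := by
  induction u using FreeMonoid.recOn with
  | one => rw [Wd_one, map_one, sub_self]; exact GeDeg.zero _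
  | of_mul x xs ih =>
    have hsplit : φ (Wd K (FreeMonoid.of x * xs)) - Wd K (FreeMonoid.of x * xs)
        = (φ (FreeAlgebra.ι K x) - FreeAlgebra.ι K x) * φ (Wd K xs)
          + FreeAlgebra.ι K x * (φ (Wd K xs) - Wd K xs) := by
      rw [Wd_mul, Wd_of, map_mul]; noncomm_ring
    rw [hsplit, FreeMonoid.length_mul, FreeMonoid.length_of]
    intro w hw
    rw [coeffW_add]
    have t1 := GeDeg.mul (h2 x) (key1 φ h1 xs) w (by omega)
    have t2 := GeDeg.mul (GeDeg_iota x) ih w (by omega)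
    rw [t1, t2, add_zero]

lemma key3 (φ : FreeAlgebra K (Fin n) ≃ₐ[K] FreeAlgebra K (Fin n))
    (h1 : ∀ j, GeDeg 1 (φ (FreeAlgebra.ι K j)))
    (h2 : ∀ j, GeDeg 2 (φ (FreeAlgebra.ι K j) - FreeAlgebra.ι K j))
    {E : FreeAlgebra K (Fin n)} {d : ℕ} (hE : GeDeg d E) : GeDeg (d + 1) (φ E - E) := by
  obtain ⟨S, c, hS, hrep⟩ : ∃ (S : Finset (FreeMonoid (Fin n))) (c : FreeMonoid (Fin n) → K),
      (∀ u ∈ S, d ≤ u.length) ∧ E = ∑ u ∈ S, c u • Wd K u := by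
    refine ⟨(FreeAlgebra.equivMonoidAlgebraFreeMonoid E).coeff.support, fun u => coeffW E u,
      ?_, eq_sum_coeffW E⟩
    intro u hu
    by_contra hlt
    exact (Finsupp.mem_support_iff.mp hu) (hE u (by omega))
  have hcongr : ∀ u ∈ S, φ (c u • Wd K u) - c u • Wd K u = c u • (φ (Wd K u) - Wd K u) :=
    fun u _ => by rw [map_smul, smul_sub]
  rw [hrep, map_sum, ← Finset.sum_sub_distrib, Finset.sum_congr rfl hcongr]
  exact GeDeg.sum fun u hu =>
    GeDeg.smul _ ((key2 φ h1 h2 u).mono (by have := hS u hu; omega))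

end GeDeg

section Laurent

variable {K : Type*} [Field K]

lemma units_val_zpow_natCast (s : Kˣ) (k : ℕ) : ((s : K)) ^ k = ((s ^ (k : ℤ) : Kˣ) : K) := by
  rw [zpow_natCast]
  push_cast
  ring

lemma vanish_exponents [Infinite K] (S : Finset ℤ) (g : ℤ → K)
    (h : ∀ s : Kˣ, ∑ e ∈ S, g e * ((s ^ e : Kˣ) : K) = 0) : ∀ e ∈ S, g e = 0 := by
  set b : ℤ := ∑ e ∈ S, |e| with hb
  have hpos : ∀ e ∈ S, 0 ≤ e + b := by
    intro e he
    have h1 : |e| ≤ b := Finset.single_le_sum (fun i _ => abs_nonneg i) he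
    have := neg_abs_le e
    omega
  set P : Polynomial K := ∑ e ∈ S, Polynomial.C (g e) * Polynomial.X ^ (e + b).toNat with hP
  have hPe : ∀ s : Kˣ, P.eval (s : K) = 0 := by
    intro s
    have : P.eval (s : K) = (∑ e ∈ S, g e * ((s ^ e : Kˣ) : K)) * ((s ^ b : Kˣ) : K) := by
      rw [hP, Polynomial.eval_finset_sum, Finset.sum_mul]
      refine Finset.sum_congr rfl fun e he => ?_
      rw [Polynomial.eval_mul, Polynomial.eval_C, Polynomial.eval_pow, Polynomial.eval_X]
      rw [units_val_zpow_natCast, Int.toNat_of_nonneg (hpos e he), zpow_add]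
      push_cast
      ring
    rw [this, h s, zero_mul]
  have hP0 : P = 0 := by
    apply Polynomial.eq_zero_of_infinite_isRoot
    apply Set.Infinite.mono (s := {x : K | x ≠ 0})
    · intro x hx
      have : x = ((Units.mk0 x hx : Kˣ) : K) := rfl
      rw [Set.mem_setOf_eq, Polynomial.IsRoot, this, hPe]
    · exact (Set.finite_singleton (0 : K)).infinite_compl
  intro e₀ he₀
  have hcoeff : P.coeff (e₀ + b).toNat = g e₀ := by
    rw [hP, Polynomial.finset_sum_coeff]
    rw [Finset.sum_eq_single e₀]
    · rw [Polynomial.coeff_C_mul_X_pow, if_pos rfl]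
    · intro e he hne
      rw [Polynomial.coeff_C_mul_X_pow, if_neg]
      intro heq
      have h1 := Int.toNat_of_nonneg (hpos e he)
      have h2 := Int.toNat_of_nonneg (hpos e₀ he₀)
      omega
    · intro h; exact absurd he₀ h
  rw [← hcoeff, hP0, Polynomial.coeff_zero]

lemma additive_laurent [Infinite K] (f : Kˣ → K) (G : ℤ →₀ K)
    (hrep : ∀ s : Kˣ, f s = G.sum fun e c => c * ((s ^ e : Kˣ) : K))
    (hadd : ∀ a s : Kˣ, f (a * s) = f a + f s) : ∀ s : Kˣ, f s = 0 := by
  intro a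
  set S : Finset ℤ := insert 0 G.support with hS
  have hsub : G.support ⊆ S := Finset.subset_insert _ _
  have hrep' : ∀ (h : ℤ → K), (∀ e, G e = 0 → h e = 0) →
      ∀ s : Kˣ, (G.sum fun e c => c * ((s ^ e : Kˣ) : K)) = ∑ e ∈ S, G e * ((s ^ e : Kˣ) : K) := by
    intro h hh s
    rw [Finsupp.sum]
    exact Finset.sum_subset hsub fun e _ he =>
      by rw [Finsupp.notMem_support_iff.mp he, zero_mul]
  have key : ∀ s : Kˣ,
      ∑ e ∈ S, (G e * ((a ^ e : Kˣ) : K) - G e - if e = 0 then f a else 0) * ((s ^ e : Kˣ) : K)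
        = 0 := by
    intro s
    have expand : ∀ e : ℤ,
        (G e * ((a ^ e : Kˣ) : K) - G e - if e = 0 then f a else 0) * ((s ^ e : Kˣ) : K)
        = G e * (((a * s) ^ e : Kˣ) : K) - G e * ((s ^ e : Kˣ) : K)
          - (if e = 0 then f a * ((s ^ e : Kˣ) : K) else 0) := by
      intro e
      rw [mul_zpow]
      push_cast
      split <;> ring
    rw [Finset.sum_congr rfl fun e _ => expand e, Finset.sum_sub_distrib,
      Finset.sum_sub_distrib, Finset.sum_ite_eq' S 0]
    rw [if_pos (Finset.mem_insert_self 0 G.support)]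
    have h1 : ∑ e ∈ S, G e * (((a * s) ^ e : Kˣ) : K) = f (a * s) := by
      rw [hrep (a * s), hrep' (fun _ => 0) (fun _ _ => rfl) (a * s)]
    have h2 : ∑ e ∈ S, G e * ((s ^ e : Kˣ) : K) = f s := by
      rw [hrep s, hrep' (fun _ => 0) (fun _ _ => rfl) s]
    rw [h1, h2, hadd a s]
    simp
  have := vanish_exponents S _ key 0 (Finset.mem_insert_self 0 G.support)
  simp only [zpow_zero, Units.val_one, mul_one, if_true, sub_self, zero_sub,
    neg_eq_zero] at this
  exact this

lemma exists_zpow_ne_one [Infinite K] {d : ℤ} (hd : d ≠ 0) : ∃ s : Kˣ, s ^ d ≠ 1 := by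
  by_contra h
  push_neg at h
  have hpow : ∀ s : Kˣ, s ^ d.natAbs = 1 := by
    intro s
    rcases Int.natAbs_eq d with he | he
    · have := h s; rw [he, zpow_natCast] at this; exact this
    · have := h s; rw [he, zpow_neg, zpow_natCast, inv_eq_one] at this; exact this
  have hne : (Polynomial.X ^ d.natAbs - Polynomial.C (1:K)) ≠ 0 :=
    Polynomial.X_pow_sub_C_ne_zero (Int.natAbs_pos.mpr hd) 1
  apply hne
  apply Polynomial.eq_zero_of_infinite_isRoot
  apply Set.Infinite.mono (s := {x : K | x ≠ 0})
  · intro x hx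
    have hval : x = ((Units.mk0 x hx : Kˣ) : K) := rfl
    rw [Set.mem_setOf_eq, Polynomial.IsRoot]
    rw [Polynomial.eval_sub, Polynomial.eval_pow, Polynomial.eval_X, Polynomial.eval_C]
    rw [hval, ← Units.val_pow_eq_pow_val, hpow, Units.val_one, sub_self]
  · exact (Set.finite_singleton (0 : K)).infinite_compl

lemma prod_zpow_sum {G : Type*} [CommGroup G] (s : G) {ι : Type*} (S : Finset ι) (f : ι → ℤ) :
    ∏ k ∈ S, s ^ f k = s ^ (∑ k ∈ S, f k) := by
  classical
  induction S using Finset.induction with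
  | empty => simp
  | insert _ _ hni ih => rw [Finset.prod_insert hni, Finset.sum_insert hni, ih, zpow_add]

end Laurent

/-- If an effective regular torus action on the free algebra has zero constant terms and
diagonal linear part `σ(t)(z_i) = t_1^{m i 1} ⋯ t_n^{m i n} z_i + (degree ≥ 2)`, then the
integer power matrix `[m i j]` is nonsingular. -/
theorem power_matrix_nonsingular
    {K : Type*} [Field K] [IsAlgClosed K] (n : ℕ)
    (σ : (Fin n → Kˣ) →* (FreeAlgebra K (Fin n) ≃ₐ[K] FreeAlgebra K (Fin n)))
    (hreg : IsRegularAction σ) (heff : Function.Injective σ)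
    (m : Matrix (Fin n) (Fin n) ℤ)
    (hconst : ∀ (t : Fin n → Kˣ) (i : Fin n), coeffW (σ t (FreeAlgebra.ι K i)) 1 = 0)
    (hlin : ∀ (t : Fin n → Kˣ) (i j : Fin n),
      coeffW (σ t (FreeAlgebra.ι K i)) (FreeMonoid.of j) =
        if j = i then ∏ k, ((t k ^ m i k : Kˣ) : K) else 0) :
    m.det ≠ 0 := by
  intro hdet
  obtain ⟨v, hv0, hv⟩ := Matrix.exists_mulVec_eq_zero_iff.mpr hdet
  have hvsum : ∀ i, ∑ k, m i k * v k = 0 := by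
    intro i
    have := congrFun hv i
    simpa [Matrix.mulVec, dotProduct] using this
  set t : Kˣ → Fin n → Kˣ := fun s j => s ^ v j with ht
  have hprodU : ∀ (s : Kˣ) (i : Fin n), ∏ k, (t s k ^ m i k) = (1 : Kˣ) := by
    intro s i
    have h1 : ∀ k : Fin n, t s k ^ m i k = s ^ (v k * m i k) := fun k =>
      (zpow_mul s (v k) (m i k)).symm
    rw [Finset.prod_congr rfl fun k _ => h1 k, prod_zpow_sum]
    have h2 : ∑ k, v k * m i k = 0 := by
      rw [← hvsum i]; exact Finset.sum_congr rfl fun k _ => mul_comm _ _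
    rw [h2, zpow_zero]
  have hprod : ∀ (s : Kˣ) (i : Fin n), (∏ k, ((t s k ^ m i k : Kˣ) : K)) = 1 := by
    intro s i
    calc ∏ k, ((t s k ^ m i k : Kˣ) : K)
        = ((∏ k, t s k ^ m i k : Kˣ) : K) :=
          (map_prod (Units.coeHom K) (fun k => t s k ^ m i k) Finset.univ).symm
      _ = 1 := by rw [hprodU s i, Units.val_one]
  have hb0 : ∀ (s : Kˣ) (i : Fin n), coeffW (σ (t s) (FreeAlgebra.ι K i)) 1 = 0 :=
    fun s i => hconst (t s) i
  have hiota1 : ∀ (i : Fin n) (w : FreeMonoid (Fin n)), w.length ≠ 1 →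
      coeffW (FreeAlgebra.ι K i) w = 0 := by
    intro i w hw
    rw [coeffW_iota, if_neg]
    intro h; subst h; exact hw (FreeMonoid.length_of i)
  have hb1 : ∀ (s : Kˣ) (i : Fin n) (w : FreeMonoid (Fin n)), w.length = 1 →
      coeffW (σ (t s) (FreeAlgebra.ι K i)) w = coeffW (FreeAlgebra.ι K i) w := by
    intro s i w hw
    obtain ⟨j, hj⟩ := List.length_eq_one_iff.mp hw
    have hwj : w = FreeMonoid.of j := FreeMonoid.toList.injective hj
    subst hwj
    rw [hlin (t s) i j, coeffW_iota]
    by_cases hji : j = i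
    · subst hji; rw [if_pos rfl, if_pos rfl, hprod]
    · rw [if_neg hji, if_neg (fun h => hji (FreeMonoid.of_injective h))]
  have hGe1 : ∀ (s : Kˣ) (j : Fin n), GeDeg 1 (σ (t s) (FreeAlgebra.ι K j)) := by
    intro s j w hw
    have hw0 : w.length = 0 := by omega
    have hw1 : w = 1 := FreeMonoid.toList.injective (List.length_eq_zero_iff.mp hw0)
    subst hw1; exact hb0 s j
  have hGe2 : ∀ (s : Kˣ) (j : Fin n),
      GeDeg 2 (σ (t s) (FreeAlgebra.ι K j) - FreeAlgebra.ι K j) := by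
    intro s j w hw
    rw [coeffW_sub]
    by_cases h1 : w.length = 1
    · rw [hb1 s j w h1, sub_self]
    · have h0 : w.length = 0 := by omega
      have hw1 : w = 1 := FreeMonoid.toList.injective (List.length_eq_zero_iff.mp h0)
      subst hw1
      rw [hb0 s j, hiota1 j 1 h1, sub_zero]
  have main : ∀ (d : ℕ) (w : FreeMonoid (Fin n)), w.length = d → ∀ (s : Kˣ) (i : Fin n),
      coeffW (σ (t s) (FreeAlgebra.ι K i)) w = coeffW (FreeAlgebra.ι K i) w := by
    intro d
    induction d using Nat.strong_induction_on with
    | _ d ih =>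
      rcases d with _ | _ | d
      · intro w hw s i
        have hw1 : w = 1 := FreeMonoid.toList.injective (List.length_eq_zero_iff.mp hw)
        subst hw1
        rw [hb0 s i, hiota1 i 1 (by simpa using hw)]
      · exact fun w hw s i => hb1 s i w hw
      · intro w hw s i
        have hwne : w ≠ FreeMonoid.of i := by
          intro h; rw [h, FreeMonoid.length_of] at hw; omega
        have hiw : coeffW (FreeAlgebra.ι K i) w = 0 := by rw [coeffW_iota, if_neg hwne]
        rw [hiw]
        have hadd : ∀ a s' : Kˣ, coeffW (σ (t (a * s')) (FreeAlgebra.ι K i)) w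
            = coeffW (σ (t a) (FreeAlgebra.ι K i)) w
              + coeffW (σ (t s') (FreeAlgebra.ι K i)) w := by
          intro a s'
          have hcomp : σ (t (a * s')) (FreeAlgebra.ι K i)
              = σ (t a) (σ (t s') (FreeAlgebra.ι K i)) := by
            have htm : t (a * s') = t a * t s' := by
              funext j; exact mul_zpow a s' (v j)
            rw [htm, map_mul, AlgEquiv.aut_mul, AlgEquiv.trans_apply]
          have hGeE : GeDeg (d + 2) (σ (t s') (FreeAlgebra.ι K i) - FreeAlgebra.ι K i) := by
            intro u hu
            rw [coeffW_sub, ih u.length (by omega) u rfl s' i, sub_self]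
          have hkey := key3 (σ (t a)) (hGe1 a) (hGe2 a) hGeE
          have hz : coeffW (σ (t a) (σ (t s') (FreeAlgebra.ι K i) - FreeAlgebra.ι K i)
              - (σ (t s') (FreeAlgebra.ι K i) - FreeAlgebra.ι K i)) w = 0 := hkey w (by omega)
          rw [coeffW_sub] at hz
          have hz' : coeffW (σ (t a) (σ (t s') (FreeAlgebra.ι K i) - FreeAlgebra.ι K i)) w
              = coeffW (σ (t s') (FreeAlgebra.ι K i) - FreeAlgebra.ι K i) w :=
            sub_eq_zero.mp hz
          have hmap : σ (t a) (σ (t s') (FreeAlgebra.ι K i))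
              = σ (t a) (FreeAlgebra.ι K i)
                + σ (t a) (σ (t s') (FreeAlgebra.ι K i) - FreeAlgebra.ι K i) := by
            rw [map_sub]; abel
          rw [hcomp, hmap, coeffW_add, hz', coeffW_sub, hiw]
          ring
        obtain ⟨F, hF⟩ := hreg.1 i w
        set G : ℤ →₀ K := F.sum fun μ c => Finsupp.single (∑ j, v j * μ j) c with hG
        have hrepG : ∀ s' : Kˣ, coeffW (σ (t s') (FreeAlgebra.ι K i)) w
            = G.sum fun e c => c * ((s' ^ e : Kˣ) : K) := by
          intro s'
          rw [hF (t s'), lEval, hG]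
          rw [Finsupp.sum_sum_index (fun a => by rw [zero_mul])
            (fun a b₁ b₂ => by rw [add_mul])]
          refine Finsupp.sum_congr fun μ _ => ?_
          rw [Finsupp.sum_single_index (by rw [zero_mul])]
          congr 1
          calc ∏ j, ((t s' j ^ μ j : Kˣ) : K)
              = ((∏ j, t s' j ^ μ j : Kˣ) : K) :=
                (map_prod (Units.coeHom K) (fun j => t s' j ^ μ j) Finset.univ).symm
            _ = ((s' ^ (∑ j, v j * μ j) : Kˣ) : K) := by
                congr 1
                rw [← prod_zpow_sum]
                exact Finset.prod_congr rfl fun j _ => (zpow_mul s' (v j) (μ j)).symm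
        exact additive_laurent
          (fun s' => coeffW (σ (t s') (FreeAlgebra.ι K i)) w) G hrepG hadd s
  have hid : ∀ s : Kˣ, σ (t s) = 1 := by
    intro s
    have hgen : ∀ i, σ (t s) (FreeAlgebra.ι K i) = FreeAlgebra.ι K i := by
      intro i
      apply FreeAlgebra.equivMonoidAlgebraFreeMonoid.injective
      exact MonoidAlgebra.ext (Finsupp.ext fun w => main w.length w rfl s i)
    have h2 : ((σ (t s)).toAlgHom) = (AlgHom.id K (FreeAlgebra K (Fin n))) :=
      FreeAlgebra.hom_ext (funext fun i => by simpa using hgen i)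
    apply AlgEquiv.ext
    intro x
    have h3 := DFunLike.congr_fun h2 x
    simpa using h3
  obtain ⟨j, hj⟩ : ∃ j, v j ≠ 0 := by
    by_contra h; push_neg at h; exact hv0 (funext h)
  obtain ⟨s₀, hs₀⟩ := exists_zpow_ne_one (K := K) hj
  have hts : σ (t s₀) = σ 1 := by rw [hid s₀, map_one]
  have h4 := congrFun (heff hts) j
  exact hs₀ (by simpa [ht] using h4)
end

section
/- (Białynicki-Birula) Any regular action of the n-dimensional torus T_n on the affine space A^n over an algebraically closed field K has a fixed point: there exists a point p ∈ K^n with σ(t, p) = p for all t ∈ T_n. -/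
set_option synthInstance.maxHeartbeats 1000000
set_option maxHeartbeats 4000000


/-- A map of affine `m`-space is a polynomial map if each component is given by a
polynomial in the coordinates. -/
def IsPolyMap {K : Type*} [CommSemiring K] {m : ℕ} (f : (Fin m → K) → (Fin m → K)) : Prop :=
  ∃ p : Fin m → MvPolynomial (Fin m) K, ∀ x i, f x i = MvPolynomial.eval x (p i)

/-- A regular torus action on affine space: each component of `σ t x` is a polynomial
in the coordinates `x` whose coefficients are Laurent polynomial functions of `t`. -/
def IsRegularAffineAction {K : Type*} [Field K] {r m : ℕ}
    (σ : (Fin r → Kˣ) → (Fin m → K) → (Fin m → K)) : Prop :=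
  ∃ P : Fin m → ((Fin m →₀ ℕ) →₀ ((Fin r → ℤ) →₀ K)),
    ∀ t x i, σ t x i = (P i).sum fun d F => lEval F t * ∏ j, x j ^ d j


section Aux

variable {K : Type*} [Field K] {n : ℕ}

/-- The monomial character of the torus attached to an exponent vector `m`. -/
noncomputable def chiHom (m : Fin n → ℤ) : (Fin n → Kˣ) →* K where
  toFun t := ∏ j, ((t j ^ m j : Kˣ) : K)
  map_one' := by simp
  map_mul' t s := by
    simp [Pi.mul_apply, mul_zpow, Units.val_mul, Finset.prod_mul_distrib]

theorem lEval_apply (F : (Fin n → ℤ) →₀ K) (t : Fin n → Kˣ) :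
    lEval F t = ∑ m ∈ F.support, F m * chiHom m t := rfl

theorem lEval_sub (F G : (Fin n → ℤ) →₀ K) (t : Fin n → Kˣ) :
    lEval (F - G) t = lEval F t - lEval G t := by
  unfold lEval
  apply Finsupp.sum_sub_index
  intro m b₁ b₂
  ring

theorem lEval_single (c : K) (t : Fin n → Kˣ) :
    lEval (Finsupp.single (0 : Fin n → ℤ) c) t = c := by
  unfold lEval
  rw [Finsupp.sum_single_index] <;> simp

/-- The subgroup of the torus consisting of tuples of `ℓ`-power roots of unity. -/
def tor (ℓ : ℕ) : Subgroup (Fin n → Kˣ) where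
  carrier := {t | ∀ j, ∃ k, t j ^ ℓ ^ k = 1}
  one_mem' := fun j => ⟨0, by simp⟩
  mul_mem' := by
    intro a b ha hb j
    obtain ⟨ka, hka⟩ := ha j
    obtain ⟨kb, hkb⟩ := hb j
    refine ⟨ka + kb, ?_⟩
    rw [Pi.mul_apply, mul_pow, pow_add, pow_mul, hka, one_pow, one_mul,
      mul_comm (ℓ ^ ka), pow_mul, hkb, one_pow]
  inv_mem' := by
    intro a ha j
    obtain ⟨k, hk⟩ := ha j
    exact ⟨k, by rw [Pi.inv_apply, inv_pow, hk, inv_one]⟩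

variable [IsAlgClosed K]

theorem exists_primitive_unit (ℓ : ℕ) (hK : (ℓ : K) ≠ 0) (k : ℕ) :
    ∃ ζ : Kˣ, (ζ ^ ℓ ^ k = 1) ∧ ∀ d : ℤ, ζ ^ d = 1 → ((ℓ : ℤ) ^ k ∣ d) := by
  haveI : NeZero ((ℓ ^ k : ℕ) : K) := ⟨by push_cast; exact pow_ne_zero _ hK⟩
  obtain ⟨ζ, hζ⟩ := HasEnoughRootsOfUnity.exists_primitiveRoot K (ℓ ^ k)
  have hℓpos : 0 < ℓ ^ k := by
    rcases Nat.eq_zero_or_pos (ℓ ^ k) with h | h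
    · exfalso; apply NeZero.ne ((ℓ ^ k : ℕ) : K); rw [h]; simp
    · exact h
  have hu : IsUnit ζ := hζ.isUnit hℓpos.ne'
  have hζu : IsPrimitiveRoot hu.unit (ℓ ^ k) := hζ.isUnit_unit hℓpos.ne'
  refine ⟨hu.unit, hζu.pow_eq_one, fun d hd => ?_⟩
  have := (hζu.zpow_eq_one_iff_dvd d).mp hd
  exact_mod_cast this

theorem chiHom_inj (ℓ : ℕ) (hℓ : 1 < ℓ) (hK : (ℓ : K) ≠ 0) {m m' : Fin n → ℤ}
    (h : ∀ t ∈ tor (K := K) ℓ, chiHom m t = chiHom m' t) : m = m' := by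
  by_contra hne
  obtain ⟨j, hj⟩ := Function.ne_iff.mp hne
  set d : ℤ := m j - m' j with hd
  have hd0 : d ≠ 0 := sub_ne_zero.mpr hj
  set k : ℕ := d.natAbs with hk
  obtain ⟨ζ, hζpow, hζord⟩ := exists_primitive_unit ℓ hK k
  set t : Fin n → Kˣ := Function.update (1 : Fin n → Kˣ) j ζ with ht
  have htor : t ∈ tor (K := K) ℓ := by
    intro j'
    by_cases hjj : j' = j
    · subst hjj; exact ⟨k, by rw [ht, Function.update_self]; exact hζpow⟩
    · exact ⟨0, by rw [ht, Function.update_of_ne hjj]; simp⟩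
  have hval : ∀ mm : Fin n → ℤ, chiHom mm t = ((ζ ^ mm j : Kˣ) : K) := by
    intro mm
    show (∏ j', ((t j' ^ mm j' : Kˣ) : K)) = _
    rw [Finset.prod_eq_single j]
    · rw [ht, Function.update_self]
    · intro j' _ hjj
      rw [ht, Function.update_of_ne hjj]; simp
    · intro habs; exact absurd (Finset.mem_univ j) habs
  have heq : ((ζ ^ m j : Kˣ) : K) = ((ζ ^ m' j : Kˣ) : K) := by
    rw [← hval m, ← hval m']; exact h t htor
  have hunit : ζ ^ m j = ζ ^ m' j := Units.ext heq
  have hzd : ζ ^ d = 1 := by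
    rw [hd, zpow_sub, hunit]; simp
  have hdvd := hζord d hzd
  have : (ℓ : ℤ) ^ k ≤ |d| := by
    refine Int.le_of_dvd (abs_pos.mpr hd0) ?_
    exact (dvd_abs _ _).mpr hdvd
  have hlt : |d| < (ℓ : ℤ) ^ k := by
    have := Nat.lt_pow_self hℓ (n := k)
    rw [hk]
    calc |(d:ℤ)| = (d.natAbs : ℤ) := by rw [Int.abs_eq_natAbs]
    _ < ((ℓ ^ d.natAbs : ℕ) : ℤ) := by exact_mod_cast this
    _ = (ℓ : ℤ) ^ d.natAbs := by push_cast; ring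
  omega

/-- Density of `ℓ`-power torsion: a Laurent polynomial vanishing on `tor ℓ` is zero. -/
theorem eq_zero_of_lEval_tor (ℓ : ℕ) (hℓ : 1 < ℓ) (hK : (ℓ : K) ≠ 0)
    (H : (Fin n → ℤ) →₀ K) (hv : ∀ t ∈ tor (K := K) ℓ, lEval H t = 0) : H = 0 := by
  classical
  set ψ : (Fin n → ℤ) → (↥(tor (K := K) ℓ) →* K) :=
    fun m => (chiHom m).comp (tor (K := K) ℓ).subtype with hψ
  have hinj : Function.Injective ψ := by
    intro m m' hmm
    refine chiHom_inj ℓ hℓ hK (fun t ht => ?_)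
    have := DFunLike.congr_fun hmm ⟨t, ht⟩
    simpa [hψ] using this
  have hli : LinearIndependent K (fun m : Fin n → ℤ => ⇑(ψ m)) :=
    (linearIndependent_monoidHom (↥(tor (K := K) ℓ)) K).comp ψ hinj
  have hz : ∀ m ∈ H.support, H m = 0 := by
    refine linearIndependent_iff'.mp hli H.support H ?_
    funext t
    have : (∑ m ∈ H.support, H m • ⇑(ψ m)) t = ∑ m ∈ H.support, H m * chiHom m t.val := by
      rw [Finset.sum_apply]
      simp [hψ, smul_eq_mul]
    rw [this, ← lEval_apply]
    simpa using hv t.val t.2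
  ext m
  by_cases hm : m ∈ H.support
  · exact hz m hm
  · simpa using Finsupp.notMem_support_iff.mp hm

end Aux

section Aux2

open MvPolynomial

variable {K : Type*} [CommRing K] {n : ℕ}

/-- Evaluating a composite of polynomial maps. -/
theorem eval_aeval' (x : Fin n → K) (g : Fin n → MvPolynomial (Fin n) K)
    (q : MvPolynomial (Fin n) K) :
    eval x (aeval g q) = eval (fun j => eval x (g j)) q := by
  have : (eval x).comp (aeval g).toRingHom = eval₂Hom (RingHom.id K) (fun j => eval x (g j)) := by
    apply ringHom_ext
    · intro r; simp
    · intro i; simp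
  have h2 := RingHom.congr_fun this q
  simpa using h2

/-- `MvPolynomial.map` commutes with `aeval` into polynomials. -/
theorem map_aeval' {S : Type*} [CommRing S] (f : K →+* S)
    (g : Fin n → MvPolynomial (Fin n) K) (q : MvPolynomial (Fin n) K) :
    map f (aeval g q) = aeval (fun j => map f (g j)) (map f q) := by
  have : (map f).comp (aeval g).toRingHom
      = ((aeval (fun j => map f (g j))).toRingHom).comp (map f) := by
    apply ringHom_ext
    · intro r; simp
    · intro i; simp
  have h2 := RingHom.congr_fun this q
  simpa using h2

/-- Restriction of a polynomial to a subalgebra containing all its coefficients. -/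
noncomputable def resPoly (A : Subalgebra ℤ K) (q : MvPolynomial (Fin n) K)
    (hq : ∀ d, q.coeff d ∈ A) : MvPolynomial (Fin n) ↥A :=
  ∑ d ∈ q.support, monomial d (⟨q.coeff d, hq d⟩ : ↥A)

theorem map_resPoly (A : Subalgebra ℤ K) (q : MvPolynomial (Fin n) K)
    (hq : ∀ d, q.coeff d ∈ A) :
    map (A.val : ↥A →+* K) (resPoly A q hq) = q := by
  unfold resPoly
  rw [map_sum]
  simp only [map_monomial]
  simpa using support_sum_monomial_coeff q

end Aux2


section Aux3

open MvPolynomial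

variable {K : Type*} [Field K] {n : ℕ}
variable (P : Fin n → ((Fin n →₀ ℕ) →₀ ((Fin n → ℤ) →₀ K)))

/-- The polynomial (in the affine coordinates) giving the `i`-th component of the action
of the torus element `t`. -/
noncomputable def Qp (t : Fin n → Kˣ) (i : Fin n) : MvPolynomial (Fin n) K :=
  (P i).sum fun d F => C (lEval F t) * ∏ j, X j ^ d j

theorem eval_Qp (t : Fin n → Kˣ) (x : Fin n → K) (i : Fin n) :
    eval x (Qp P t i) = (P i).sum fun d F => lEval F t * ∏ j, x j ^ d j := by
  unfold Qp Finsupp.sum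
  rw [map_sum]
  congr 1
  funext d
  simp

/-- The Laurent polynomial `t ↦ σ t p i` obtained by specializing the coordinates at `p`. -/
noncomputable def Wp (p : Fin n → K) (i : Fin n) : (Fin n → ℤ) →₀ K :=
  (P i).sum fun d F => (∏ j, p j ^ d j) • F

theorem lEval_Wp (p : Fin n → K) (i : Fin n) (t : Fin n → Kˣ) :
    lEval (Wp P p i) t = (P i).sum fun d F => lEval F t * ∏ j, p j ^ d j := by
  have hlin : ∀ F : (Fin n → ℤ) →₀ K, lEval F t
      = Finsupp.linearCombination K (fun m : Fin n → ℤ => ∏ j, ((t j ^ m j : Kˣ) : K)) F := by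
    intro F
    rw [Finsupp.linearCombination_apply, lEval]
    congr 1
  rw [hlin]
  unfold Wp Finsupp.sum
  rw [map_sum]
  congr 1
  funext d
  rw [map_smul, ← hlin, smul_eq_mul, mul_comm]

end Aux3

instance : IsJacobsonRing ℤ := by
  rw [isJacobsonRing_iff_prime_eq]
  intro P hP
  by_cases hbot : P = ⊥
  · subst hbot
    refine le_antisymm (fun x hx => ?_) Ideal.le_jacobson
    rw [Ideal.mem_bot]
    by_contra hx0
    obtain ⟨p, hple, hp⟩ := Nat.exists_infinite_primes (x.natAbs + 1)
    have hmax : (Ideal.span {(p : ℤ)}).IsMaximal := by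
      apply PrincipalIdealRing.isMaximal_of_irreducible
      exact (Int.prime_iff_natAbs_prime.mpr (by simpa using hp)).irreducible
    have hxp : x ∈ Ideal.span {(p : ℤ)} :=
      Ideal.mem_sInf.mp hx ⟨bot_le, hmax⟩
    have hdvd : (p : ℤ) ∣ x := Ideal.mem_span_singleton.mp hxp
    have : p ∣ x.natAbs := Int.natAbs_dvd_natAbs.mpr (by simpa using hdvd)
    have := Nat.le_of_dvd (Int.natAbs_pos.mpr hx0) this
    omega
  · haveI := hP
    haveI : P.IsMaximal := IsPrime.to_maximal_ideal hbot
    exact Ideal.jacobson_eq_self_of_isMaximal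

theorem int_not_isField : ¬ IsField ℤ := by
  intro h
  obtain ⟨x, hx⟩ := h.mul_inv_cancel (two_ne_zero)
  omega

/-- The residue field of a maximal ideal in a finitely generated `ℤ`-algebra is finite. -/
theorem finite_residue_field {A : Type*} [CommRing A] [Algebra.FiniteType ℤ A]
    (m : Ideal A) [hm : m.IsMaximal] : Finite (A ⧸ m) := by
  classical
  set F := A ⧸ m
  letI : Field F := Ideal.Quotient.field m
  haveI hFT : Algebra.FiniteType ℤ F :=
    Algebra.FiniteType.of_surjective (Ideal.Quotient.mkₐ ℤ m)
      (Ideal.Quotient.mkₐ_surjective ℤ m)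
  obtain ⟨N, f, hf⟩ := Algebra.FiniteType.iff_quotient_mvPolynomial''.mp hFT
  have hInt : (f.toRingHom.comp MvPolynomial.C).IsIntegral :=
    MvPolynomial.comp_C_integral_of_surjective_of_isJacobsonRing f.toRingHom hf
  have halg : f.toRingHom.comp MvPolynomial.C = algebraMap ℤ F :=
    Subsingleton.elim _ _
  haveI hIntF : Algebra.IsIntegral ℤ F := ⟨fun x => by
    have := hInt x
    rwa [halg] at this⟩
  -- the characteristic is a prime
  set p' := ringChar F with hp'
  have hp'0 : p' ≠ 0 := by
    intro h0
    haveI : CharP F 0 := h0 ▸ ringChar.charP F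
    haveI : CharZero F := CharP.charP_to_charZero F
    have hinj : Function.Injective (algebraMap ℤ F) := by
      have : (algebraMap ℤ F) = Int.castRingHom F := Subsingleton.elim _ _
      rw [this]
      exact Int.cast_injective
    exact int_not_isField ((Algebra.IsIntegral.isField_iff_isField hinj).mpr (Field.toIsField F))
  haveI : NeZero p' := ⟨hp'0⟩
  haveI : CharP F p' := ringChar.charP F
  -- F is a finitely generated ℤ-module
  haveI hMF : Module.Finite ℤ F := Algebra.IsIntegral.finite
  obtain ⟨s, hs⟩ := hMF.fg_top
  -- surjection from a finite type
  have hsurj : Function.Surjective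
      (fun c : (↥(s : Set F)) → ZMod p' =>
        ∑ y ∈ s.attach, ((ZMod.castHom (dvd_refl p') F) (c ⟨y.1, y.2⟩)) * y.1) := by
    intro x
    have hx : x ∈ Submodule.span ℤ (s : Set F) := hs ▸ Submodule.mem_top
    obtain ⟨cc, hccsub, hccsum⟩ := Submodule.mem_span_set.mp hx
    have hcast : ∀ z : ℤ, (ZMod.castHom (dvd_refl p') F) ((z : ZMod p')) = (z : F) := by
      intro z
      have h1 : ((ZMod.castHom (dvd_refl p') F).comp (Int.castRingHom (ZMod p'))) z
          = (Int.castRingHom F) z := by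
        rw [Subsingleton.elim ((ZMod.castHom (dvd_refl p') F).comp (Int.castRingHom (ZMod p')))
          (Int.castRingHom F)]
      simpa using h1
    refine ⟨fun y => ((cc y.1 : ℤ) : ZMod p'), ?_⟩
    rw [← hccsum]
    rw [Finsupp.sum_of_support_subset cc (by exact_mod_cast hccsub) (fun y r => r • y)
      (by intro y _; simp)]
    rw [← Finset.sum_attach s (fun y => cc y • y)]
    simp only [hcast, zsmul_eq_mul]
  exact Finite.of_surjective _ hsurj

section Aux5

variable {K : Type*} [Field K] {n : ℕ}

/-- The subgroup of the torus of elements killed by `m`. -/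
def torN (m : ℕ) : Subgroup (Fin n → Kˣ) where
  carrier := {t | t ^ m = 1}
  one_mem' := one_pow m
  mul_mem' := by
    intro a b ha hb
    show (a * b) ^ m = 1
    rw [mul_pow, ha, hb, one_mul]
  inv_mem' := by
    intro a ha
    show a⁻¹ ^ m = 1
    rw [inv_pow, ha, inv_one]

theorem torN_finite (m : ℕ) (hm : m ≠ 0) : Finite ↥(torN (K := K) (n := n) m) := by
  classical
  have hSfin : {x : K | x ^ m = 1}.Finite := by
    apply Set.Finite.subset (Polynomial.nthRoots m (1 : K)).toFinset.finite_toSet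
    intro x hx
    simp only [Finset.mem_coe, Multiset.mem_toFinset, Polynomial.mem_nthRoots (Nat.pos_of_ne_zero hm)]
    exact hx
  haveI := hSfin.to_subtype
  set f : ↥(torN (K := K) (n := n) m) → (Fin n → ↥{x : K | x ^ m = 1}) :=
    fun t j => ⟨((t.1 j : Kˣ) : K), by
      have h1 : t.1 j ^ m = 1 := by
        have := congrFun t.2 j
        simpa using this
      show ((t.1 j : Kˣ) : K) ^ m = 1
      rw [← Units.val_pow_eq_pow_val, h1, Units.val_one]⟩ with hf
  have hfinj : Function.Injective f := by
    intro a b hab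
    apply Subtype.ext
    funext j
    apply Units.ext
    have := congrFun hab j
    simpa [hf] using this
  exact Finite.of_injective f hfinj

theorem torN_isPGroup (ℓ N : ℕ) : IsPGroup ℓ ↥(torN (K := K) (n := n) (ℓ ^ N)) := by
  intro g
  refine ⟨N, ?_⟩
  apply Subtype.ext
  rw [SubmonoidClass.coe_pow]
  exact g.2

end Aux5

open MvPolynomial

/-- **(Białynicki-Birula)** Any regular action of the `n`-dimensional torus on affine
`n`-space over an algebraically closed field has a fixed point. -/
theorem torus_action_on_affine_space_has_fixed_point
    {K : Type*} [Field K] [IsAlgClosed K] (n : ℕ)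
    (σ : (Fin n → Kˣ) → (Fin n → K) → (Fin n → K))
    (hid : ∀ x, σ 1 x = x)
    (hcomp : ∀ t₁ t₂ x, σ t₁ (σ t₂ x) = σ (t₁ * t₂) x)
    (hreg : IsRegularAffineAction σ) :
    ∃ p : Fin n → K, ∀ t, σ t p = p := by
  classical
  obtain ⟨P, hP⟩ := hreg
  -- choose a prime different from the characteristic
  obtain ⟨ℓ, hℓge, hℓp⟩ := Nat.exists_infinite_primes (ringChar K + 2)
  have hℓ1 : 1 < ℓ := hℓp.one_lt
  have hℓK : (ℓ : K) ≠ 0 := by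
    intro h0
    have hdvd : ringChar K ∣ ℓ := (ringChar.spec K ℓ).mp h0
    rcases hℓp.eq_one_or_self_of_dvd _ hdvd with h | h
    · have h1 : ((1 : ℕ) : K) = 0 := (ringChar.spec K 1).mpr (h ▸ dvd_refl _)
      simp at h1
    · omega
  have hσeval : ∀ t x i, eval x (Qp P t i) = σ t x i :=
    fun t x i => (eval_Qp P t x i).trans (hP t x i).symm
  set Jgen : Set (MvPolynomial (Fin n) K) :=
    {q | ∃ t ∈ tor (K := K) (n := n) ℓ, ∃ i : Fin n, q = Qp P t i - X i} with hJgen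
  by_cases hJ : Ideal.span Jgen = ⊤
  · -- no common zero: derive a contradiction via reduction to a finite field
    exfalso
    have h1 : (1 : MvPolynomial (Fin n) K) ∈ Ideal.span Jgen := hJ ▸ Submodule.mem_top
    obtain ⟨c, hcsub, hcsum⟩ := Submodule.mem_span_set.mp h1
    have hchoice : ∀ b : ↥c.support, ∃ ti : (Fin n → Kˣ) × Fin n,
        ti.1 ∈ tor (K := K) (n := n) ℓ ∧
          (b : MvPolynomial (Fin n) K) = Qp P ti.1 ti.2 - X ti.2 := by
      intro b
      obtain ⟨t, ht, i, hi⟩ := hcsub b.2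
      exact ⟨(t, i), ht, hi⟩
    choose τ hτT hτeq using hchoice
    choose κ hκ using fun b : ↥c.support => (hτT b : ∀ j, ∃ k, (τ b).1 j ^ ℓ ^ k = 1)
    set N : ℕ := Finset.univ.sup (fun bj : ↥c.support × Fin n => κ bj.1 bj.2) with hN
    have hκle : ∀ b j, κ b j ≤ N := by
      intro b j
      rw [hN]
      exact Finset.le_sup (f := fun bj : ↥c.support × Fin n => κ bj.1 bj.2)
        (Finset.mem_univ (b, j))
    have hbG : ∀ b : ↥c.support, ((τ b).1) ^ ℓ ^ N = 1 := by
      intro b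
      funext j
      have h1 : (τ b).1 j ^ ℓ ^ κ b j = 1 := hκ b j
      have h2 : ℓ ^ N = ℓ ^ κ b j * ℓ ^ (N - κ b j) := by
        rw [← pow_add]
        congr 1
        have := hκle b j
        omega
      rw [Pi.pow_apply, Pi.one_apply, h2, pow_mul, h1, one_pow]
    set G : Subgroup (Fin n → Kˣ) := torN (ℓ ^ N) with hG
    haveI hGfin : Finite ↥G := torN_finite (ℓ ^ N) (by positivity)
    set tbG : ↥c.support → ↥G := fun b => ⟨(τ b).1, hbG b⟩ with htbG
    -- the finitely generated subalgebra of coefficients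
    set coeffsOf : MvPolynomial (Fin n) K → Set K :=
      fun q => (fun d => q.coeff d) '' ↑q.support with hcoeffsOf
    have hcoeffsOf_fin : ∀ q, (coeffsOf q).Finite :=
      fun q => (q.support.finite_toSet).image _
    set S : Set K := ((⋃ (t : ↥G), ⋃ (i : Fin n), coeffsOf (Qp P t.1 i)) ∪
        (⋃ b : ↥c.support, coeffsOf (c b.1))) ∪ {(↑ℓ)⁻¹} with hS
    have hSfin : S.Finite := by
      refine Set.Finite.union (Set.Finite.union ?_ ?_) (Set.finite_singleton _)
      · exact Set.finite_iUnion (fun t => Set.finite_iUnion (fun i => hcoeffsOf_fin _))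
      · exact Set.finite_iUnion (fun b => hcoeffsOf_fin _)
    set A : Subalgebra ℤ K := Algebra.adjoin ℤ S with hA
    obtain ⟨Sfin, hSfin_eq⟩ := hSfin.exists_finset_coe
    haveI hAft : Algebra.FiniteType ℤ ↥A := by
      rw [hA, ← hSfin_eq]
      exact (Subalgebra.fg_iff_finiteType _).mp (Subalgebra.fg_adjoin_finset Sfin)
    have hQcoef : ∀ (t : ↥G) (i : Fin n) (d : Fin n →₀ ℕ), (Qp P t.1 i).coeff d ∈ A := by
      intro t i d
      by_cases hd : d ∈ (Qp P t.1 i).support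
      · apply Algebra.subset_adjoin
        rw [hS]
        exact Or.inl (Or.inl (Set.mem_iUnion.mpr ⟨t, Set.mem_iUnion.mpr ⟨i, ⟨d, hd, rfl⟩⟩⟩))
      · rw [MvPolynomial.notMem_support_iff.mp hd]
        exact zero_mem A
    have hccoef : ∀ (b : ↥c.support) (d : Fin n →₀ ℕ), (c b.1).coeff d ∈ A := by
      intro b d
      by_cases hd : d ∈ (c b.1).support
      · apply Algebra.subset_adjoin
        rw [hS]
        exact Or.inl (Or.inr (Set.mem_iUnion.mpr ⟨b, ⟨d, hd, rfl⟩⟩))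
      · rw [MvPolynomial.notMem_support_iff.mp hd]
        exact zero_mem A
    have hinvA : ((ℓ : K))⁻¹ ∈ A := by
      apply Algebra.subset_adjoin
      rw [hS]
      exact Or.inr rfl
    -- lift everything to the subalgebra
    set Qhat : ↥G → Fin n → MvPolynomial (Fin n) ↥A :=
      fun t i => resPoly A (Qp P t.1 i) (hQcoef t i) with hQhat
    set chat : ↥c.support → MvPolynomial (Fin n) ↥A :=
      fun b => resPoly A (c b.1) (hccoef b) with hchat
    have hmapQ : ∀ t i, map (A.val : ↥A →+* K) (Qhat t i) = Qp P t.1 i :=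
      fun t i => map_resPoly A _ _
    have hmapc : ∀ b, map (A.val : ↥A →+* K) (chat b) = c b.1 :=
      fun b => map_resPoly A _ _
    have hmapinj : Function.Injective
        (map (A.val : ↥A →+* K) : MvPolynomial (Fin n) ↥A → MvPolynomial (Fin n) K) :=
      map_injective _ Subtype.val_injective
    -- the action identities, upstairs
    have hQ1 : ∀ i, Qp P (1 : Fin n → Kˣ) i = X i := by
      intro i
      apply MvPolynomial.funext
      intro x
      rw [hσeval, MvPolynomial.eval_X]
      exact congrFun (hid x) i
    have hQmul : ∀ (t s : Fin n → Kˣ) (i : Fin n),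
        Qp P (t * s) i = aeval (fun j => Qp P s j) (Qp P t i) := by
      intro t s i
      apply MvPolynomial.funext
      intro x
      rw [eval_aeval']
      have hx : (fun j => eval x (Qp P s j)) = σ s x := funext fun j => hσeval s x j
      rw [hx, hσeval, hσeval, hcomp]
    -- the action identities, in the subalgebra
    have hQ1A : ∀ i, Qhat 1 i = X i := by
      intro i
      apply hmapinj
      rw [hmapQ, MvPolynomial.map_X]
      have h1 : ((1 : ↥G) : Fin n → Kˣ) = 1 := rfl
      rw [h1, hQ1]
    have hQmulA : ∀ (t s : ↥G) (i : Fin n),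
        Qhat (t * s) i = aeval (fun j => Qhat s j) (Qhat t i) := by
      intro t s i
      apply hmapinj
      rw [hmapQ, map_aeval']
      simp only [hmapQ]
      have h1 : ((t * s : ↥G) : Fin n → Kˣ) = (t : Fin n → Kˣ) * s := rfl
      rw [h1, hQmul]
    -- the relation, upstairs
    have hrel : ∑ b ∈ c.support.attach,
        (c b.1) * (Qp P (τ b).1 (τ b).2 - X (τ b).2) = 1 := by
      rw [Finsupp.sum] at hcsum
      rw [← hcsum, ← Finset.sum_attach c.support (fun b => c b • b)]
      congr 1
      funext b
      rw [smul_eq_mul, ← hτeq b]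
    -- the relation, in the subalgebra
    have hrelA : ∑ b ∈ c.support.attach,
        (chat b) * (Qhat (tbG b) (τ b).2 - X (τ b).2) = 1 := by
      apply hmapinj
      rw [map_one, map_sum]
      have hterm : ∀ b ∈ c.support.attach,
          map (A.val : ↥A →+* K) ((chat b) * (Qhat (tbG b) (τ b).2 - X (τ b).2))
            = (c b.1) * (Qp P (τ b).1 (τ b).2 - X (τ b).2) := by
        intro b _
        rw [map_mul, map_sub, hmapc, hmapQ, MvPolynomial.map_X]
      rw [Finset.sum_congr rfl hterm, hrel]
    -- pass to a finite residue field
    haveI : Nontrivial ↥A := ⟨⟨0, 1, fun h => by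
      have := congrArg (A.val) h
      simp at this⟩⟩
    obtain ⟨m, hm⟩ := Ideal.exists_maximal ↥A
    haveI := hm
    letI F := ↥A ⧸ m
    letI : Field F := Ideal.Quotient.field m
    haveI : Finite F := finite_residue_field m
    set ρ : ↥A →+* F := Ideal.Quotient.mk m with hρ
    set q : ↥G → Fin n → MvPolynomial (Fin n) F :=
      fun t i => map ρ (Qhat t i) with hq
    have hq1 : ∀ i, q 1 i = X i := by
      intro i
      rw [hq]
      show map ρ (Qhat 1 i) = X i
      rw [hQ1A, MvPolynomial.map_X]
    have hqmul : ∀ (t s : ↥G) (i : Fin n),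
        q (t * s) i = aeval (fun j => q s j) (q t i) := by
      intro t s i
      show map ρ (Qhat (t * s) i) = _
      rw [hQmulA, map_aeval']
    have hrelF : ∑ b ∈ c.support.attach,
        (map ρ (chat b)) * (q (tbG b) (τ b).2 - X (τ b).2) = 1 := by
      have h2 := congrArg (map ρ) hrelA
      rw [map_one, map_sum] at h2
      rw [← h2]
      apply Finset.sum_congr rfl
      intro b _
      rw [map_mul, map_sub, MvPolynomial.map_X]
    -- the action of G on affine space over the finite field
    letI actSMul : SMul ↥G (Fin n → F) := ⟨fun t x => fun i => eval x (q t i)⟩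
    letI actMul : MulAction ↥G (Fin n → F) :=
      { one_smul := fun x => by
          funext i
          show eval x (q 1 i) = x i
          rw [hq1, MvPolynomial.eval_X]
        mul_smul := fun t s x => by
          funext i
          show eval x (q (t * s) i) = eval (fun j => eval x (q s j)) (q t i)
          rw [hqmul, eval_aeval'] }
    -- counting fixed points
    haveI : Fact ℓ.Prime := ⟨hℓp⟩
    have hGp : IsPGroup ℓ ↥G := torN_isPGroup ℓ N
    have hmod := hGp.card_modEq_card_fixedPoints (Fin n → F)
    haveI : Fintype F := Fintype.ofFinite F
    have hcharF : (ℓ : F) ≠ 0 := by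
      have hA1 : ((ℓ : ↥A) * ⟨((ℓ : K))⁻¹, hinvA⟩ : ↥A) = 1 := by
        apply Subtype.ext
        push_cast
        exact mul_inv_cancel₀ hℓK
      intro h0
      have h2 := congrArg ρ hA1
      rw [map_mul, map_natCast, map_one, h0, zero_mul] at h2
      exact zero_ne_one h2
    have hℓcard : ¬ ℓ ∣ Nat.card (Fin n → F) := by
      intro hdvd
      rw [Nat.card_fun] at hdvd
      haveI : CharP F (ringChar F) := ringChar.charP F
      obtain ⟨d, hpprime, hcard⟩ := FiniteField.card F (ringChar F)
      rw [Nat.card_eq_fintype_card, hcard] at hdvd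
      have h3 : ℓ ∣ ringChar F := hℓp.dvd_of_dvd_pow (hℓp.dvd_of_dvd_pow hdvd)
      have h4 : ℓ = ringChar F := (Nat.prime_dvd_prime_iff_eq hℓp hpprime).mp h3
      exact hcharF (h4 ▸ CharP.cast_eq_zero F (ringChar F))
    have hne : Nat.card ↥(MulAction.fixedPoints ↥G (Fin n → F)) ≠ 0 := by
      intro h0
      rw [h0] at hmod
      exact hℓcard (Nat.modEq_zero_iff_dvd.mp hmod)
    have hnonempty : Nonempty ↥(MulAction.fixedPoints ↥G (Fin n → F)) :=
      Nat.card_ne_zero.mp hne |>.1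
    obtain ⟨x₀, hx₀⟩ := hnonempty
    -- evaluate the relation at the fixed point
    have heval := congrArg (eval x₀) hrelF
    rw [map_one, map_sum] at heval
    have hzero : ∀ b ∈ c.support.attach,
        eval x₀ ((map ρ (chat b)) * (q (tbG b) (τ b).2 - X (τ b).2)) = 0 := by
      intro b _
      rw [map_mul, map_sub, MvPolynomial.eval_X]
      have hfix : (tbG b) • x₀ = x₀ := MulAction.mem_fixedPoints.mp hx₀ (tbG b)
      have h5 : eval x₀ (q (tbG b) (τ b).2) = x₀ (τ b).2 := congrFun hfix (τ b).2
      rw [h5, sub_self, mul_zero]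
    rw [Finset.sum_congr rfl hzero, Finset.sum_const_zero] at heval
    exact zero_ne_one heval
  · -- the ideal is proper: use the Nullstellensatz
    obtain ⟨M, hM, hle⟩ := Ideal.exists_le_maximal _ hJ
    obtain ⟨p, hMp⟩ := (MvPolynomial.isMaximal_iff_eq_vanishingIdeal_singleton (I := M)).mp hM
    refine ⟨p, fun t => ?_⟩
    have hfixT : ∀ s ∈ tor (K := K) (n := n) ℓ, ∀ i, σ s p i = p i := by
      intro s hs i
      have hmem : Qp P s i - X i ∈ M := hle (Ideal.subset_span ⟨s, hs, i, rfl⟩)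
      rw [hMp] at hmem
      have h2 : eval p (Qp P s i - X i) = 0 := (MvPolynomial.mem_vanishingIdeal_singleton_iff p _).mp hmem
      rw [map_sub, MvPolynomial.eval_X, sub_eq_zero, hσeval] at h2
      exact h2
    funext i
    have hW : ∀ s : Fin n → Kˣ, lEval (Wp P p i) s = σ s p i := by
      intro s
      rw [lEval_Wp]
      exact (hP s p i).symm
    have hH : (Wp P p i - Finsupp.single 0 (p i)) = 0 := by
      apply eq_zero_of_lEval_tor ℓ hℓ1 hℓK
      intro s hs
      rw [lEval_sub, lEval_single, hW, hfixT s hs i, sub_self]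
    have h6 := congrArg (fun H => lEval H t) hH
    rw [lEval_sub, lEval_single, hW] at h6
    have h7 : lEval (0 : (Fin n → ℤ) →₀ K) t = 0 := by
      unfold lEval
      simp
    rw [h7] at h6
    exact sub_eq_zero.mp h6
end

section
/- Let σ be a regular action of a torus T (a subtorus T_1 ≅ K^× suffices) on F_n = K⟨z_1,…,z_n⟩ by K-algebra automorphisms such that for every t ∈ T and every i, σ(t)(z_i) = z_i + (terms of degree ≥ 2). Then σ(t) is the identity automorphism for every t ∈ T (so such an action cannot be effective unless T is trivial). -/
open MonoidAlgebra FreeMonoid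

section Aux

variable {K : Type*} [Field K] {n : ℕ}

/-- single at a word of different length evaluates to zero. -/
lemma singleLenNe {w v : FreeMonoid (Fin n)} (b : K) (h : w.length ≠ v.length) :
    (MonoidAlgebra.single w b).coeff v = 0 :=
  Finsupp.single_eq_of_ne' fun hw => h (congrArg FreeMonoid.length hw)

/-- coefficient of a product vanishes below the sum of the support-length bounds. -/
lemma mulCoeffLow (f g : MonoidAlgebra K (FreeMonoid (Fin n))) (p q : ℕ)
    (hf : ∀ w : FreeMonoid (Fin n), w.length < p → f.coeff w = 0)
    (hg : ∀ w : FreeMonoid (Fin n), w.length < q → g.coeff w = 0)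
    (v : FreeMonoid (Fin n)) (hv : v.length < p + q) : (f * g).coeff v = 0 := by
  classical
  rw [MonoidAlgebra.coeff_mul, Finsupp.sum]
  refine Finset.sum_eq_zero fun a _ => ?_
  rw [Finsupp.sum]
  refine Finset.sum_eq_zero fun b _ => ?_
  split_ifs with h
  · have hl : a.length + b.length = v.length := by rw [← FreeMonoid.length_mul, h]
    rcases lt_or_ge a.length p with h1 | h1
    · rw [hf a h1, zero_mul]
    · rw [hg b (by omega), mul_zero]
  · rfl

/-- words map to themselves plus terms of length ≥ |w| + d - 1. -/
lemma wordLow (ψ : MonoidAlgebra K (FreeMonoid (Fin n)) →ₐ[K] MonoidAlgebra K (FreeMonoid (Fin n)))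
    (d : ℕ) (hd : 2 ≤ d)
    (hψ : ∀ (a : Fin n) (v : FreeMonoid (Fin n)), v.length < d →
      (ψ (MonoidAlgebra.single (FreeMonoid.of a) 1)).coeff v = (MonoidAlgebra.single (FreeMonoid.of a) (1:K)).coeff v)
    (w v : FreeMonoid (Fin n)) (hv : v.length < w.length + d - 1) :
    (ψ (MonoidAlgebra.single w 1)).coeff v = (MonoidAlgebra.single w (1:K)).coeff v := by
  induction w using FreeMonoid.recOn generalizing v with
  | one => rw [← MonoidAlgebra.one_def, map_one]
  | of_mul a w' ih =>
    have hlen : (FreeMonoid.of a * w').length = w'.length + 1 := by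
      rw [FreeMonoid.length_mul, FreeMonoid.length_of]; omega
    have e1 : (MonoidAlgebra.single (FreeMonoid.of a * w') (1:K))
        = MonoidAlgebra.single (FreeMonoid.of a) 1 * MonoidAlgebra.single w' 1 := by
      rw [MonoidAlgebra.single_mul_single, one_mul]
    rw [e1, map_mul]
    have split : ψ (MonoidAlgebra.single (FreeMonoid.of a) 1) * ψ (MonoidAlgebra.single w' 1)
        = MonoidAlgebra.single (FreeMonoid.of a) 1 * MonoidAlgebra.single w' 1
          + ((MonoidAlgebra.single (FreeMonoid.of a) 1)
              * (ψ (MonoidAlgebra.single w' 1) - MonoidAlgebra.single w' 1)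
            + (ψ (MonoidAlgebra.single (FreeMonoid.of a) 1) - MonoidAlgebra.single (FreeMonoid.of a) 1)
              * ψ (MonoidAlgebra.single w' 1)) := by noncomm_ring
    rw [split, MonoidAlgebra.coeff_add, MonoidAlgebra.coeff_add, Finsupp.add_apply, Finsupp.add_apply]
    have t1 : ((((MonoidAlgebra.single (FreeMonoid.of a) (1:K))
        * (ψ (MonoidAlgebra.single w' 1) - MonoidAlgebra.single w' 1)
        : MonoidAlgebra K (FreeMonoid (Fin n))))).coeff v = 0 := by
      refine mulCoeffLow _ _ 1 (w'.length + d - 1) ?_ ?_ v (by rw [hlen] at hv; omega)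
      · intro u hu
        exact singleLenNe _ (by rw [FreeMonoid.length_of]; omega)
      · intro u hu
        rw [MonoidAlgebra.coeff_sub, Finsupp.sub_apply, ih u hu, sub_self]
    have t2 : ((((ψ (MonoidAlgebra.single (FreeMonoid.of a) 1) - MonoidAlgebra.single (FreeMonoid.of a) (1:K))
        * ψ (MonoidAlgebra.single w' 1)
        : MonoidAlgebra K (FreeMonoid (Fin n))))).coeff v = 0 := by
      refine mulCoeffLow _ _ d w'.length ?_ ?_ v (by rw [hlen] at hv; omega)
      · intro u hu
        rw [MonoidAlgebra.coeff_sub, Finsupp.sub_apply, hψ a u hu, sub_self]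
      · intro u hu
        rw [ih u (by omega)]
        exact singleLenNe _ (by omega)
    rw [t1, t2, add_zero, add_zero]

/-- expansion of `ψ f` coefficients through the coefficients of `f`. -/
lemma psiApply (ψ : MonoidAlgebra K (FreeMonoid (Fin n)) →ₐ[K] MonoidAlgebra K (FreeMonoid (Fin n)))
    (f : MonoidAlgebra K (FreeMonoid (Fin n))) (v : FreeMonoid (Fin n)) :
    (ψ f).coeff v = f.coeff.sum fun w c => c * (ψ (MonoidAlgebra.single w 1)).coeff v := by
  conv_lhs => rw [← MonoidAlgebra.sum_coeff_single f]
  rw [map_finsuppSum, MonoidAlgebra.coeff_finsuppSum, Finsupp.sum_apply]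
  refine Finsupp.sum_congr fun w _ => ?_
  have h1 : (MonoidAlgebra.single w (f.coeff w) : MonoidAlgebra K (FreeMonoid (Fin n)))
      = f.coeff w • MonoidAlgebra.single w (1:K) := by
    rw [MonoidAlgebra.smul_single, smul_eq_mul, mul_one]
  rw [h1, map_smul, MonoidAlgebra.coeff_smul, Finsupp.smul_apply, smul_eq_mul]

lemma sumSingleCoeff (f : MonoidAlgebra K (FreeMonoid (Fin n))) (v : FreeMonoid (Fin n)) :
    (f.coeff.sum fun w c => c * (MonoidAlgebra.single w (1:K)).coeff v) = f.coeff v := by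
  classical
  rw [Finsupp.sum, Finset.sum_eq_single v]
  · rw [MonoidAlgebra.coeff_single, Finsupp.single_eq_same, mul_one]
  · intro b _ hb
    rw [MonoidAlgebra.coeff_single, Finsupp.single_eq_of_ne' hb, mul_zero]
  · intro h
    rw [Finsupp.notMem_support_iff.mp h, zero_mul]

/-- core induction: the iterates of a unipotent endomorphism have linearly growing
lowest-degree deviation. -/
lemma coreIter (ψ : MonoidAlgebra K (FreeMonoid (Fin n)) →ₐ[K] MonoidAlgebra K (FreeMonoid (Fin n)))
    (d : ℕ) (hd : 2 ≤ d)
    (hψ : ∀ (a : Fin n) (v : FreeMonoid (Fin n)), v.length < d →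
      (ψ (MonoidAlgebra.single (FreeMonoid.of a) 1)).coeff v = (MonoidAlgebra.single (FreeMonoid.of a) (1:K)).coeff v)
    (i : Fin n) (k : ℕ) :
    (∀ v : FreeMonoid (Fin n), v.length < d →
        (ψ^[k] (MonoidAlgebra.single (FreeMonoid.of i) 1)).coeff v
          = (MonoidAlgebra.single (FreeMonoid.of i) (1:K)).coeff v) ∧
    (∀ v : FreeMonoid (Fin n), v.length = d →
        (ψ^[k] (MonoidAlgebra.single (FreeMonoid.of i) 1)).coeff v
          = (k:K) * (ψ (MonoidAlgebra.single (FreeMonoid.of i) 1)).coeff v) := by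
  classical
  induction k with
  | zero =>
    constructor
    · intro v _; rw [Function.iterate_zero_apply]
    · intro v hv
      rw [Function.iterate_zero_apply, Nat.cast_zero, zero_mul]
      exact singleLenNe _ (by rw [FreeMonoid.length_of]; omega)
  | succ k ih =>
    obtain ⟨ihl, ihh⟩ := ih
    have hsplit : ∀ v : FreeMonoid (Fin n),
        (ψ (ψ^[k] (MonoidAlgebra.single (FreeMonoid.of i) 1))).coeff v
          = (ψ^[k] (MonoidAlgebra.single (FreeMonoid.of i) 1)).coeff v
            + ((ψ^[k] (MonoidAlgebra.single (FreeMonoid.of i) 1)).coeff.sum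
                fun w c => c * ((ψ (MonoidAlgebra.single w 1)).coeff v - (MonoidAlgebra.single w (1:K)).coeff v)) := by
      intro v
      rw [psiApply ψ _ v]
      have h1 : ((ψ^[k] (MonoidAlgebra.single (FreeMonoid.of i) 1)).coeff.sum
            fun w c => c * (ψ (MonoidAlgebra.single w 1)).coeff v)
          = ((ψ^[k] (MonoidAlgebra.single (FreeMonoid.of i) 1)).coeff.sum
            fun w c => c * (MonoidAlgebra.single w (1:K)).coeff v
              + c * ((ψ (MonoidAlgebra.single w 1)).coeff v - (MonoidAlgebra.single w (1:K)).coeff v)) :=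
        Finsupp.sum_congr fun w _ => by ring
      rw [h1, Finsupp.sum_add, sumSingleCoeff]
    constructor
    · intro v hv
      rw [Function.iterate_succ_apply', hsplit v, ihl v hv]
      have h0 : ((ψ^[k] (MonoidAlgebra.single (FreeMonoid.of i) 1)).coeff.sum
          fun w c => c * ((ψ (MonoidAlgebra.single w 1)).coeff v - (MonoidAlgebra.single w (1:K)).coeff v)) = 0 := by
        rw [Finsupp.sum]
        refine Finset.sum_eq_zero fun w _ => ?_
        rcases Nat.eq_zero_or_pos w.length with h0 | h1
        · obtain rfl := FreeMonoid.length_eq_zero.mp h0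
          have hone : ψ (MonoidAlgebra.single (1 : FreeMonoid (Fin n)) (1:K))
              = MonoidAlgebra.single (1 : FreeMonoid (Fin n)) (1:K) := by
            rw [← MonoidAlgebra.one_def, map_one]
          rw [hone, sub_self, mul_zero]
        · rw [wordLow ψ d hd hψ w v (by omega), sub_self, mul_zero]
      rw [h0, add_zero]
    · intro v hv
      rw [Function.iterate_succ_apply', hsplit v, ihh v hv]
      have h0 : ((ψ^[k] (MonoidAlgebra.single (FreeMonoid.of i) 1)).coeff.sum
          fun w c => c * ((ψ (MonoidAlgebra.single w 1)).coeff v - (MonoidAlgebra.single w (1:K)).coeff v))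
          = (ψ (MonoidAlgebra.single (FreeMonoid.of i) 1)).coeff v := by
        rw [Finsupp.sum, Finset.sum_eq_single (FreeMonoid.of i)]
        · rw [ihl (FreeMonoid.of i) (by rw [FreeMonoid.length_of]; omega),
            singleLenNe (w := FreeMonoid.of i) (v := v) (1:K) (by rw [FreeMonoid.length_of]; omega),
            MonoidAlgebra.coeff_single, Finsupp.single_eq_same,
            sub_zero, one_mul]
        · intro b _ hbne
          rcases lt_or_ge b.length d with hbl | hbl
          · rw [ihl b hbl, MonoidAlgebra.coeff_single, Finsupp.single_eq_of_ne' (fun h => hbne h.symm), zero_mul]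
          · rw [wordLow ψ d hd hψ b v (by omega), sub_self, mul_zero]
        · intro h
          rw [Finsupp.notMem_support_iff.mp h, zero_mul]
      rw [h0]
      push_cast
      ring

end Aux

section Seq

variable {K : Type*} [Field K]

/-- linear independence of characters ℕ → K via difference operators. -/
lemma charlike (U : Finset K) :
    (∀ u ∈ U, u ≠ 1) → ∀ (b : K → K) (e : K),
      (∀ k : ℕ, e + ∑ u ∈ U, b u * u ^ k = 0) → e = 0 := by
  classical
  induction U using Finset.induction_on with
  | empty =>
    intro _ b e h
    simpa using h 0
  | @insert a s hnotmem ih =>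
    intro hU b e h
    have h1 : ∀ k : ℕ, e * (1 - a) + ∑ u ∈ s, (b u * (u - a)) * u ^ k = 0 := by
      intro k
      have hk := h k
      have hk1 := h (k + 1)
      rw [Finset.sum_insert hnotmem] at hk hk1
      have expand : ∑ u ∈ s, (b u * (u - a)) * u ^ k
          = ∑ u ∈ s, (b u * u ^ (k + 1) - a * (b u * u ^ k)) :=
        Finset.sum_congr rfl fun u _ => by ring
      rw [expand, Finset.sum_sub_distrib, ← Finset.mul_sum]
      linear_combination hk1 - a * hk
    have h2 := ih (fun u hu => hU u (Finset.mem_insert_of_mem hu))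
      (fun u => b u * (u - a)) (e * (1 - a)) h1
    have ha : (1 : K) - a ≠ 0 := sub_ne_zero.mpr (Ne.symm (hU a (Finset.mem_insert_self a s)))
    rcases mul_eq_zero.mp h2 with h | h
    · exact h
    · exact absurd h ha

/-- If an exponential sum equals `k ↦ k * c`, then `c = 0`. -/
lemma seqLemma {μ : Type*} (S : Finset μ) (cf : μ → K) (u : μ → K) (cc : K)
    (h : ∀ k : ℕ, ∑ m ∈ S, cf m * u m ^ k = (k : K) * cc) : cc = 0 := by
  classical
  have h2 : ∀ k : ℕ, ∑ m ∈ S, (cf m * (u m - 1)) * u m ^ k = cc := by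
    intro k
    have e1 : ∑ m ∈ S, (cf m * (u m - 1)) * u m ^ k
        = ∑ m ∈ S, (cf m * u m ^ (k + 1) - cf m * u m ^ k) :=
      Finset.sum_congr rfl fun m _ => by ring
    rw [e1, Finset.sum_sub_distrib, h (k + 1), h k]
    push_cast
    ring
  have h3 : ∀ k : ℕ, ∑ v ∈ S.image u, (∑ m ∈ S.filter (fun m => u m = v), cf m * (v - 1)) * v ^ k
      = cc := by
    intro k
    rw [← h2 k]
    refine Finset.sum_image' (fun m => (cf m * (u m - 1)) * u m ^ k) fun m _ => ?_
    rw [Finset.sum_mul]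
    refine Finset.sum_congr rfl fun j hj => ?_
    obtain ⟨-, h'⟩ := Finset.mem_filter.mp hj
    show cf j * (u m - 1) * u m ^ k = cf j * (u j - 1) * u j ^ k
    rw [h']
  have h4 : ∀ k : ℕ, -cc + ∑ v ∈ (S.image u).filter (fun v => v ≠ 1),
      (∑ m ∈ S.filter (fun m => u m = v), cf m * (v - 1)) * v ^ k = 0 := by
    intro k
    rw [Finset.sum_filter_of_ne, h3 k]
    · ring
    · intro x _ hx hx1
      apply hx
      subst hx1
      simp
  have h5 := charlike ((S.image u).filter (fun v => v ≠ 1))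
    (fun v hv => (Finset.mem_filter.mp hv).2)
    (fun v => ∑ m ∈ S.filter (fun m => u m = v), cf m * (v - 1)) (-cc) h4
  exact neg_eq_zero.mp h5

end Seq


section Glue

variable {K : Type*} [Field K] {n : ℕ}

lemma eqvIota (i : Fin n) :
    FreeAlgebra.equivMonoidAlgebraFreeMonoid (FreeAlgebra.ι K i)
      = MonoidAlgebra.single (FreeMonoid.of i) 1 := by
  simp [FreeAlgebra.equivMonoidAlgebraFreeMonoid, MonoidAlgebra.of_apply]

lemma levalPow {r : ℕ} (F : (Fin r → ℤ) →₀ K) (t : Fin r → Kˣ) (k : ℕ) :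
    lEval F (t ^ k) = ∑ m ∈ F.support, F m * (∏ j, ((t j ^ m j : Kˣ) : K)) ^ k := by
  rw [lEval, Finsupp.sum]
  refine Finset.sum_congr rfl fun m _ => ?_
  congr 1
  rw [← Finset.prod_pow]
  refine Finset.prod_congr rfl fun j _ => ?_
  rw [Pi.pow_apply, ← Units.val_pow_eq_pow_val]
  congr 1
  rw [← zpow_natCast (t j) k, ← zpow_mul, mul_comm, zpow_mul, zpow_natCast]

end Glue


/-- Key: iterating a unipotent automorphism multiplies the lowest-degree deviation. -/
lemma keyPow {K : Type*} [Field K] {n : ℕ}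
    (φ : FreeAlgebra K (Fin n) ≃ₐ[K] FreeAlgebra K (Fin n)) (d : ℕ) (hd2 : 2 ≤ d)
    (hlow : ∀ (a : Fin n) (v : FreeMonoid (Fin n)), v.length < d →
        coeffW (φ (FreeAlgebra.ι K a)) v = (MonoidAlgebra.single (FreeMonoid.of a) (1:K)).coeff v)
    (i : Fin n) (w0 : FreeMonoid (Fin n)) (hw0 : w0.length = d) (k : ℕ) :
    coeffW ((φ ^ k) (FreeAlgebra.ι K i)) w0 = (k : K) * coeffW (φ (FreeAlgebra.ι K i)) w0 := by
  set ψ : MonoidAlgebra K (FreeMonoid (Fin n)) →ₐ[K] MonoidAlgebra K (FreeMonoid (Fin n)) :=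
    ((FreeAlgebra.equivMonoidAlgebraFreeMonoid.toAlgHom.comp φ.toAlgHom).comp
      FreeAlgebra.equivMonoidAlgebraFreeMonoid.symm.toAlgHom) with hψ
  have hψe : ∀ x, ψ (FreeAlgebra.equivMonoidAlgebraFreeMonoid x)
      = FreeAlgebra.equivMonoidAlgebraFreeMonoid (φ x) := by
    intro x; simp [hψ]
  have hψa : ∀ a : Fin n, ψ (MonoidAlgebra.single (FreeMonoid.of a) 1)
      = FreeAlgebra.equivMonoidAlgebraFreeMonoid (φ (FreeAlgebra.ι K a)) := by
    intro a; rw [← eqvIota, hψe]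
  have hψlow : ∀ (a : Fin n) (v : FreeMonoid (Fin n)), v.length < d →
      (ψ (MonoidAlgebra.single (FreeMonoid.of a) 1)).coeff v
        = (MonoidAlgebra.single (FreeMonoid.of a) (1:K)).coeff v := by
    intro a v hv
    rw [hψa]
    exact hlow a v hv
  have iter : ∀ k : ℕ, FreeAlgebra.equivMonoidAlgebraFreeMonoid ((φ ^ k) (FreeAlgebra.ι K i))
      = ψ^[k] (MonoidAlgebra.single (FreeMonoid.of i) 1) := by
    intro k
    induction k with
    | zero => rw [pow_zero, Function.iterate_zero_apply, AlgEquiv.one_apply, eqvIota]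
    | succ k ih =>
      rw [pow_succ', AlgEquiv.mul_apply, ← hψe, ih]
      exact (Function.iterate_succ_apply' (⇑ψ) k _).symm
  have hcore := (coreIter ψ d hd2 hψlow i k).2 w0 hw0
  show (FreeAlgebra.equivMonoidAlgebraFreeMonoid ((φ ^ k) (FreeAlgebra.ι K i))).coeff w0 = _
  rw [iter k, hcore, hψa]
  rfl

/-- If a regular torus action on the free algebra satisfies
`σ(t)(z_i) = z_i + (terms of degree ≥ 2)` for every `t` and `i`, then `σ(t)` is the
identity automorphism for every `t`. -/
theorem unipotent_regular_torus_action_is_trivial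
    {K : Type*} [Field K] [IsAlgClosed K] (r n : ℕ)
    (σ : (Fin r → Kˣ) →* (FreeAlgebra K (Fin n) ≃ₐ[K] FreeAlgebra K (Fin n)))
    (hreg : IsRegularAction σ)
    (hconst : ∀ (t : Fin r → Kˣ) (i : Fin n), coeffW (σ t (FreeAlgebra.ι K i)) 1 = 0)
    (hlin : ∀ (t : Fin r → Kˣ) (i j : Fin n),
      coeffW (σ t (FreeAlgebra.ι K i)) (FreeMonoid.of j) = if j = i then 1 else 0) :
    ∀ t, σ t = 1 := by
  classical
  intro t
  by_cases H : ∀ (i : Fin n) (w : FreeMonoid (Fin n)), 2 ≤ w.length →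
      coeffW (σ t (FreeAlgebra.ι K i)) w = 0
  · have hxi : ∀ i : Fin n, σ t (FreeAlgebra.ι K i) = FreeAlgebra.ι K i := by
      intro i
      apply FreeAlgebra.equivMonoidAlgebraFreeMonoid.injective
      rw [eqvIota]
      refine MonoidAlgebra.ext (Finsupp.ext fun v => ?_)
      show coeffW (σ t (FreeAlgebra.ι K i)) v = (MonoidAlgebra.single (FreeMonoid.of i) (1:K)).coeff v
      obtain h0 | h1 | h2 : v.length = 0 ∨ v.length = 1 ∨ 2 ≤ v.length := by omega
      · obtain rfl := FreeMonoid.length_eq_zero.mp h0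
        rw [hconst t i]
        exact (singleLenNe _ (by rw [FreeMonoid.length_of, FreeMonoid.length_one]; omega)).symm
      · obtain ⟨j, rfl⟩ := FreeMonoid.length_eq_one.mp h1
        rw [hlin t i j]
        simp only [MonoidAlgebra.coeff_single, Finsupp.single_apply, FreeMonoid.of_injective.eq_iff]
        by_cases hji : j = i
        · subst hji; simp
        · simp [hji, Ne.symm hji]
      · rw [H i v h2]
        exact (singleLenNe _ (by rw [FreeMonoid.length_of]; omega)).symm
    have h1 : (σ t).toAlgHom = (1 : FreeAlgebra K (Fin n) ≃ₐ[K] FreeAlgebra K (Fin n)).toAlgHom :=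
      FreeAlgebra.hom_ext (funext fun i => by simp [hxi i])
    refine AlgEquiv.ext fun x => ?_
    have h2 := DFunLike.congr_fun h1 x
    simpa using h2
  · exfalso
    push_neg at H
    obtain ⟨i0, w0', hl0, hc0⟩ := H
    have hP : ∃ L : ℕ, ∃ (i : Fin n) (w : FreeMonoid (Fin n)),
        w.length = L ∧ 2 ≤ L ∧ coeffW (σ t (FreeAlgebra.ι K i)) w ≠ 0 :=
      ⟨w0'.length, i0, w0', rfl, hl0, hc0⟩
    have hd' := Nat.find_spec hP
    set d := Nat.find hP with hdd
    obtain ⟨i, w0, hw0len, hd2, hc⟩ := hd'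
    have hmin : ∀ (i' : Fin n) (w : FreeMonoid (Fin n)), 2 ≤ w.length → w.length < d →
        coeffW (σ t (FreeAlgebra.ι K i')) w = 0 := by
      intro i' w h2 hlt
      by_contra hne
      exact Nat.find_min hP hlt ⟨i', w, rfl, h2, hne⟩
    have hlow : ∀ (a : Fin n) (v : FreeMonoid (Fin n)), v.length < d →
        coeffW (σ t (FreeAlgebra.ι K a)) v = (MonoidAlgebra.single (FreeMonoid.of a) (1:K)).coeff v := by
      intro a v hv
      obtain h0 | h1 | h2 : v.length = 0 ∨ v.length = 1 ∨ 2 ≤ v.length := by omega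
      · obtain rfl := FreeMonoid.length_eq_zero.mp h0
        rw [hconst t a]
        exact (singleLenNe _ (by rw [FreeMonoid.length_of, FreeMonoid.length_one]; omega)).symm
      · obtain ⟨j, rfl⟩ := FreeMonoid.length_eq_one.mp h1
        rw [hlin t a j]
        simp only [MonoidAlgebra.coeff_single, Finsupp.single_apply, FreeMonoid.of_injective.eq_iff]
        by_cases hja : j = a
        · subst hja; simp
        · simp [hja, Ne.symm hja]
      · rw [hmin a v h2 hv]
        exact (singleLenNe _ (by rw [FreeMonoid.length_of]; omega)).symm
    obtain ⟨F, hF⟩ := hreg.1 i w0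
    have hseq : ∀ k : ℕ, ∑ m ∈ F.support, F m * (∏ j, ((t j ^ m j : Kˣ) : K)) ^ k
        = (k : K) * coeffW (σ t (FreeAlgebra.ι K i)) w0 := by
      intro k
      rw [← levalPow, ← hF (t ^ k), map_pow]
      exact keyPow (σ t) d hd2 hlow i w0 hw0len k
    exact hc (seqLemma F.support (fun m => F m)
      (fun m => ∏ j, ((t j ^ m j : Kˣ) : K)) _ hseq)
end

section
/- Let K be an algebraically closed field and let p be a Laurent polynomial in n variables over K such that p(t_1², …, t_n²) = 2·p(t_1, …, t_n) for all (t_1,…,t_n) ∈ (K^×)^n. Then p = 0. -/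
section aux
variable {K : Type*} [Field K] [Infinite K] {n : ℕ}

/-- In an infinite field, for any nonzero integer `d` there is a unit `u` with `u ^ d ≠ 1`. -/
lemma exists_unit_zpow_ne_one (d : ℤ) (hd : d ≠ 0) : ∃ u : Kˣ, u ^ d ≠ 1 := by
  have hk : d.natAbs ≠ 0 := Int.natAbs_ne_zero.mpr hd
  have hfin : Set.Finite {x : K | x ^ d.natAbs = 1} := by
    have hsub : {x : K | x ^ d.natAbs = 1} ⊆
        {x : K | (Polynomial.X ^ d.natAbs - 1 : Polynomial K).IsRoot x} := by
      intro x hx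
      simp only [Set.mem_setOf_eq, Polynomial.IsRoot, Polynomial.eval_sub, Polynomial.eval_pow,
        Polynomial.eval_X, Polynomial.eval_one, sub_eq_zero]
      exact hx
    refine Set.Finite.subset (Polynomial.finite_setOf_isRoot ?_) hsub
    intro hzero
    have h1 : ((Polynomial.X : Polynomial K) ^ d.natAbs - 1).coeff d.natAbs = 1 := by
      simp [Polynomial.coeff_one, hk]
    rw [hzero] at h1
    simp at h1
  have hins : Set.Finite (insert (0 : K) {x : K | x ^ d.natAbs = 1}) := hfin.insert _
  obtain ⟨x, hx⟩ := hins.infinite_compl.nonempty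
  simp only [Set.mem_compl_iff, Set.mem_insert_iff, Set.mem_setOf_eq, not_or] at hx
  obtain ⟨hx0, hx1⟩ := hx
  refine ⟨Units.mk0 x hx0, ?_⟩
  intro hcon
  apply hx1
  have hnat : (Units.mk0 x hx0) ^ d.natAbs = 1 := by
    rcases Int.natAbs_eq d with he | he
    · have := hcon
      rw [he, zpow_natCast] at this
      exact this
    · have : (Units.mk0 x hx0) ^ (-(d.natAbs : ℤ)) = 1 := by rw [← he]; exact hcon
      rw [zpow_neg, inv_eq_one, zpow_natCast] at this
      exact this
  have := congrArg (Units.val) hnat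
  simpa using this

/-- The monomial character. -/
noncomputable def lChar (m : Fin n → ℤ) : (Fin n → Kˣ) →* K where
  toFun t := ∏ j, ((t j ^ m j : Kˣ) : K)
  map_one' := by simp
  map_mul' s t := by
    simp only [Pi.mul_apply, mul_zpow, Units.val_mul, Finset.prod_mul_distrib]

lemma lChar_injective : Function.Injective (lChar (K := K) (n := n)) := by
  intro m m' hmm
  by_contra hne
  obtain ⟨i, hi⟩ : ∃ i, m i ≠ m' i := by
    by_contra hcon
    push_neg at hcon
    exact hne (funext hcon)
  obtain ⟨u, hu⟩ := exists_unit_zpow_ne_one (K := K) (m i - m' i) (sub_ne_zero.mpr hi)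
  apply hu
  have := congrArg (fun f : (Fin n → Kˣ) →* K => f (fun j => if j = i then u else 1)) hmm
  simp only [lChar, MonoidHom.coe_mk, OneHom.coe_mk] at this
  have hL : ∀ mm : Fin n → ℤ,
      (∏ j, (((if j = i then u else 1) ^ mm j : Kˣ) : K)) = ((u ^ mm i : Kˣ) : K) := by
    intro mm
    rw [Finset.prod_eq_single i]
    · simp
    · intro b _ hb; simp [hb]
    · simp
  rw [hL m, hL m'] at this
  have : u ^ m i = u ^ m' i := Units.ext this
  rw [zpow_sub]
  rw [this]
  simp

omit [Infinite K] in
lemma lEval_eq_linearCombination (F : (Fin n → ℤ) →₀ K) (t : Fin n → Kˣ) :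
    lEval F t =
      Finsupp.linearCombination K (fun m : Fin n → ℤ => ∏ j, ((t j ^ m j : Kˣ) : K)) F := by
  simp [lEval, Finsupp.linearCombination_apply, Finsupp.sum, smul_eq_mul]

lemma lEval_eq_zero_imp (F : (Fin n → ℤ) →₀ K) (h0 : ∀ t : Fin n → Kˣ, lEval F t = 0) :
    F = 0 := by
  have li : LinearIndependent K (fun m : Fin n → ℤ => ⇑(lChar (K := K) m)) :=
    (linearIndependent_monoidHom (Fin n → Kˣ) K).comp _ lChar_injective
  rw [linearIndependent_iff] at li
  apply li
  rw [Finsupp.linearCombination_apply]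
  funext t
  simpa [Finsupp.sum, Finset.sum_apply, lChar, lEval] using h0 t

end aux

/-- A Laurent polynomial `p` in `n` variables over an algebraically closed field
satisfying `p(t₁², …, t_n²) = 2 p(t₁, …, t_n)` on the whole torus is zero. -/
theorem laurent_poly_doubling_eq_zero
    {K : Type*} [Field K] [IsAlgClosed K] (n : ℕ) (p : (Fin n → ℤ) →₀ K)
    (h : ∀ t : Fin n → Kˣ, lEval p (fun j => (t j) ^ 2) = 2 * lEval p t) :
    p = 0 := by
  have hdblinj : Function.Injective (fun m : Fin n → ℤ => fun j => 2 * m j) := by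
    intro a b hab
    funext j
    have := congrFun hab j
    simpa using this
  set dbl : (Fin n → ℤ) ↪ (Fin n → ℤ) := ⟨fun m => fun j => 2 * m j, hdblinj⟩ with hdbl
  set g : (Fin n → ℤ) →₀ K := Finsupp.embDomain dbl p - (2 : K) • p with hg
  have hgz : g = 0 := by
    apply lEval_eq_zero_imp
    intro t
    have h1 : lEval (Finsupp.embDomain dbl p) t = lEval p (fun j => (t j) ^ 2) := by
      unfold lEval
      rw [Finsupp.sum_embDomain]
      refine Finsupp.sum_congr fun m _ => ?_
      congr 1
      refine Finset.prod_congr rfl fun j _ => ?_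
      congr 1
      show t j ^ ((2 : ℤ) * m j) = (t j ^ (2 : ℕ)) ^ m j
      rw [show ((2 : ℤ)) = ((2 : ℕ) : ℤ) from rfl, zpow_mul, zpow_natCast]
    have h3 : lEval g t = lEval (Finsupp.embDomain dbl p) t - 2 * lEval p t := by
      rw [hg, lEval_eq_linearCombination, lEval_eq_linearCombination,
        lEval_eq_linearCombination, map_sub, map_smul, smul_eq_mul]
    rw [h3, h1, h t]
    ring
  -- coefficient identity : p k = 2 * p (dbl k)
  have key : ∀ k : Fin n → ℤ, p k = 2 * p (fun j => 2 * k j) := by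
    intro k
    have := congrFun (congrArg (DFunLike.coe) hgz) (dbl k)
    rw [hg] at this
    simp only [Finsupp.sub_apply, Finsupp.smul_apply, Finsupp.coe_zero, Pi.zero_apply,
      Finsupp.embDomain_apply_self, smul_eq_mul] at this
    have h4 : p k - 2 * p (fun j => 2 * k j) = 0 := this
    linear_combination h4
  ext k
  rw [Finsupp.coe_zero, Pi.zero_apply]
  by_cases hk : k = 0
  · subst hk
    have h0 := key 0
    have he : (fun j : Fin n => 2 * (0 : Fin n → ℤ) j) = (0 : Fin n → ℤ) := by
      funext j; simp
    rw [he] at h0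
    linear_combination -h0
  · obtain ⟨i, hi⟩ : ∃ i, k i ≠ 0 := by
      by_contra hcon
      push_neg at hcon
      exact hk (funext hcon)
    have iter : ∀ N : ℕ, p k = 2 ^ N * p (fun j => 2 ^ N * k j) := by
      intro N
      induction N with
      | zero => simp
      | succ m ih =>
        rw [ih, key (fun j => 2 ^ m * k j)]
        have he : (fun j : Fin n => 2 * ((fun j : Fin n => 2 ^ m * k j) j))
            = (fun j : Fin n => 2 ^ (m + 1) * k j) := by
          funext j; ring
        rw [he]
        ring
    obtain ⟨N, hN⟩ : ∃ N : ℕ, (fun j => 2 ^ N * k j) ∉ p.support := by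
      by_contra hcon
      push_neg at hcon
      have hinj : Function.Injective (fun N : ℕ => (fun j => 2 ^ N * k j : Fin n → ℤ)) := by
        intro a b hab
        have := congrFun hab i
        simp only at this
        have h2 : (2 : ℤ) ^ a = 2 ^ b := mul_right_cancel₀ hi this
        have h3 : ((2 ^ a : ℕ) : ℤ) = ((2 ^ b : ℕ) : ℤ) := by push_cast; exact h2
        exact Nat.pow_right_injective (le_refl 2) (Nat.cast_injective h3)
      have : (↑p.support : Set (Fin n → ℤ)).Infinite :=
        Set.infinite_of_injective_forall_mem hinj (fun N => hcon N)
      exact this p.support.finite_toSet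
    have hz : p (fun j => 2 ^ N * k j) = 0 := Finsupp.notMem_support_iff.mp hN
    rw [iter N, hz, mul_zero]
end
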